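/- arXiv:1910.11385 — 4 statements merged into one kernel-verified Lean document; each statement's English description precedes it below -/
import Mathlib

section
/- Let H be a reproducing kernel Hilbert space of functions f : Δ^m → ℝ^m with matrix-valued kernel k : Δ^m × Δ^m → ℝ^{m×m}. Then for all t ∈ Δ^m, the operator norm of the map u ↦ k(·,t)u from (ℝ^m, ‖·‖_p) to H equals ‖k(t,t)‖_{p;p'}^{1/2}, where p' is the Hölder conjugate of p and ‖·‖_{p;p'} denotes the induced operator norm from ℓ^p to ℓ^{p'}. -/
open MeasureTheory
open scoped ENNReal

/-- The `ℓ^p` norm on `ℝ^m`, including `p = ∞`. -/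
noncomputable def lpnorm {m : ℕ} (p : ℝ≥0∞) (x : Fin m → ℝ) : ℝ :=
  ‖(WithLp.equiv p (Fin m → ℝ)).symm x‖

/-- The operator norm of a matrix `A : ℝ^m → ℝ^m` from `ℓ^p` to `ℓ^q`,
`‖A‖_{p;q} = sup_{x ≠ 0} ‖Ax‖_q / ‖x‖_p`. -/
noncomputable def matOpNorm {m : ℕ} (p q : ℝ≥0∞) (A : Matrix (Fin m) (Fin m) ℝ) : ℝ :=
  sSup {c : ℝ | ∃ x : Fin m → ℝ, x ≠ 0 ∧ c = lpnorm q (A.mulVec x) / lpnorm p x}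

lemma lpnorm_nonneg {m : ℕ} {p : ℝ≥0∞} (hp : 1 ≤ p) (x : Fin m → ℝ) : 0 ≤ lpnorm p x := by
  haveI : Fact (1 ≤ p) := ⟨hp⟩
  unfold lpnorm; exact norm_nonneg _

lemma lpnorm_eq_zero {m : ℕ} {p : ℝ≥0∞} (hp : 1 ≤ p) {x : Fin m → ℝ} :
    lpnorm p x = 0 ↔ x = 0 := by
  haveI : Fact (1 ≤ p) := ⟨hp⟩
  unfold lpnorm
  rw [norm_eq_zero]
  exact WithLp.toLp_eq_zero p

lemma lpnorm_eq_sum' {m : ℕ} {p : ℝ≥0∞} (hp0 : 0 < p.toReal) (x : Fin m → ℝ) :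
    lpnorm p x = (∑ i, |x i| ^ p.toReal) ^ (1 / p.toReal) := by
  unfold lpnorm
  rw [PiLp.norm_eq_sum hp0]
  simp [Real.norm_eq_abs]

lemma lpnorm_top {m : ℕ} (x : Fin m → ℝ) : lpnorm ∞ x = ⨆ i, |x i| := by
  unfold lpnorm
  rw [PiLp.norm_eq_ciSup]
  simp [Real.norm_eq_abs]

lemma lpnorm_pos {m : ℕ} {p : ℝ≥0∞} (hp : 1 ≤ p) {x : Fin m → ℝ} (hx : x ≠ 0) :
    0 < lpnorm p x :=
  lt_of_le_of_ne (lpnorm_nonneg hp x) (fun h => hx ((lpnorm_eq_zero hp).1 h.symm))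

lemma coord_le_lpnorm {m : ℕ} {p : ℝ≥0∞} (hp : 1 ≤ p) (x : Fin m → ℝ) (i : Fin m) :
    |x i| ≤ lpnorm p x := by
  rcases eq_or_ne p ∞ with rfl | hpt
  · rw [lpnorm_top]
    exact le_ciSup (f := fun j => |x j|) (Set.Finite.bddAbove (Set.finite_range _)) i
  · have hp0 : 0 < p.toReal := ENNReal.toReal_pos (lt_of_lt_of_le zero_lt_one hp).ne' hpt
    rw [lpnorm_eq_sum' hp0]
    have h1 : (|x i| ^ p.toReal) ^ (1 / p.toReal) = |x i| := by
      rw [← Real.rpow_mul (abs_nonneg _), mul_one_div, div_self hp0.ne', Real.rpow_one]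
    rw [← h1]
    apply Real.rpow_le_rpow (Real.rpow_nonneg (abs_nonneg _) _)
    · exact Finset.single_le_sum (fun j _ => Real.rpow_nonneg (abs_nonneg _) _) (Finset.mem_univ i)
    · positivity

lemma lpnorm_single {m : ℕ} {p : ℝ≥0∞} (hp : 1 ≤ p) (i : Fin m) (c : ℝ) :
    lpnorm p (Pi.single i c) = |c| := by
  haveI : Nonempty (Fin m) := ⟨i⟩
  rcases eq_or_ne p ∞ with rfl | hpt
  · rw [lpnorm_top]
    apply le_antisymm
    · apply ciSup_le
      intro j
      rcases eq_or_ne j i with rfl | hj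
      · simp
      · simp [Pi.single_eq_of_ne hj]
    · have := le_ciSup (f := fun j => |Pi.single i c j|) (Set.Finite.bddAbove (Set.finite_range _)) i
      simpa using this
  · have hp0 : 0 < p.toReal := ENNReal.toReal_pos (lt_of_lt_of_le zero_lt_one hp).ne' hpt
    rw [lpnorm_eq_sum' hp0]
    have : ∑ j, |Pi.single i c j| ^ p.toReal = |c| ^ p.toReal := by
      rw [Finset.sum_eq_single i]
      · simp
      · intro j _ hj
        simp [Pi.single_eq_of_ne hj, Real.zero_rpow hp0.ne']
      · simp
    rw [this, ← Real.rpow_mul (abs_nonneg _), mul_one_div, div_self hp0.ne', Real.rpow_one]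

lemma lpnorm_le_sum {m : ℕ} {p : ℝ≥0∞} (hp : 1 ≤ p) (x : Fin m → ℝ) :
    lpnorm p x ≤ ∑ i, |x i| := by
  haveI : Fact (1 ≤ p) := ⟨hp⟩
  have hx : (WithLp.linearEquiv p ℝ (Fin m → ℝ)).symm x
      = ∑ i, (WithLp.linearEquiv p ℝ (Fin m → ℝ)).symm (Pi.single i (x i)) := by
    rw [← map_sum]
    congr 1
    exact (Finset.univ_sum_single x).symm
  calc lpnorm p x = ‖∑ i, (WithLp.linearEquiv p ℝ (Fin m → ℝ)).symm (Pi.single i (x i))‖ := by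
        rw [← hx]; rfl
    _ ≤ ∑ i, ‖(WithLp.linearEquiv p ℝ (Fin m → ℝ)).symm (Pi.single i (x i))‖ := norm_sum_le _ _
    _ = ∑ i, |x i| := Finset.sum_congr rfl fun i _ => lpnorm_single hp i (x i)
lemma conj_cases {p p' : ℝ≥0∞} (hp : 1 ≤ p) (hp' : 1 ≤ p') (hconj : 1/p + 1/p' = 1) :
    (p = 1 ∧ p' = ∞) ∨ (p = ∞ ∧ p' = 1) ∨
      (p ≠ ∞ ∧ p' ≠ ∞ ∧ Real.HolderConjugate p.toReal p'.toReal) := by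
  simp only [one_div] at hconj
  rcases eq_or_ne p ∞ with rfl | hpt
  · right; left
    refine ⟨rfl, ?_⟩
    rw [ENNReal.inv_top, zero_add] at hconj
    rwa [ENNReal.inv_eq_one] at hconj
  rcases eq_or_ne p' ∞ with rfl | hpt'
  · left
    refine ⟨?_, rfl⟩
    rw [ENNReal.inv_top, add_zero] at hconj
    rwa [ENNReal.inv_eq_one] at hconj
  · right; right
    refine ⟨hpt, hpt', ?_⟩
    have hp0 : p ≠ 0 := (lt_of_lt_of_le zero_lt_one hp).ne'
    have hp0' : p' ≠ 0 := (lt_of_lt_of_le zero_lt_one hp').ne'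
    have hp1 : p ≠ 1 := by
      rintro rfl
      rw [inv_one] at hconj
      have : p'⁻¹ = 0 :=
        (ENNReal.add_right_inj (a := 1) (by simp)).1 (by simpa using hconj)
      rw [ENNReal.inv_eq_zero] at this
      exact hpt' this
    have h1p : 1 < p.toReal := by
      rw [← ENNReal.toReal_one]
      exact (ENNReal.toReal_lt_toReal ENNReal.one_ne_top hpt).2 (lt_of_le_of_ne hp (Ne.symm hp1))
    have hsum : p.toReal⁻¹ + p'.toReal⁻¹ = 1 := by
      have h1 : (p⁻¹ + p'⁻¹).toReal = (1 : ℝ≥0∞).toReal := congrArg ENNReal.toReal hconj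
      rw [ENNReal.toReal_add (by simp [hp0]) (by simp [hp0']), ENNReal.toReal_inv,
        ENNReal.toReal_inv, ENNReal.toReal_one] at h1
      exact h1
    exact Real.holderConjugate_iff.mpr ⟨h1p, hsum⟩
lemma lpnorm_one {m : ℕ} (y : Fin m → ℝ) : lpnorm 1 y = ∑ i, |y i| := by
  rw [lpnorm_eq_sum' (by simp)]
  simp

lemma holder_mul {m : ℕ} {p p' : ℝ≥0∞} (hp : 1 ≤ p) (hp' : 1 ≤ p')
    (hconj : 1/p + 1/p' = 1) (y v : Fin m → ℝ) :
    ∑ i, y i * v i ≤ lpnorm p y * lpnorm p' v := by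
  have step1 : ∑ i, y i * v i ≤ ∑ i, |y i| * |v i| :=
    Finset.sum_le_sum fun i _ => by rw [← abs_mul]; exact le_abs_self _
  rcases conj_cases hp hp' hconj with ⟨rfl, rfl⟩ | ⟨rfl, rfl⟩ | ⟨hpt, hpt', hc⟩
  · refine le_trans step1 ?_
    rw [lpnorm_one, Finset.sum_mul]
    exact Finset.sum_le_sum fun i _ =>
      mul_le_mul_of_nonneg_left (coord_le_lpnorm le_top v i) (abs_nonneg _)
  · refine le_trans step1 ?_
    rw [lpnorm_one, Finset.mul_sum]
    exact Finset.sum_le_sum fun i _ =>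
      mul_le_mul_of_nonneg_right (coord_le_lpnorm le_top y i) (abs_nonneg _)
  · have hp0 : 0 < p.toReal := lt_trans zero_lt_one hc.lt
    have hq0 : 0 < p'.toReal := lt_trans zero_lt_one hc.symm.lt
    rw [lpnorm_eq_sum' hp0, lpnorm_eq_sum' hq0]
    exact Real.inner_le_Lp_mul_Lq (s := Finset.univ) (f := y) (g := v) hc

lemma lp_attain {m : ℕ} (hm : 0 < m) {p p' : ℝ≥0∞} (hp : 1 ≤ p) (hp' : 1 ≤ p')
    (hconj : 1/p + 1/p' = 1) (v : Fin m → ℝ) :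
    ∃ y : Fin m → ℝ, y ≠ 0 ∧ ∑ i, y i * v i = lpnorm p y * lpnorm p' v := by
  haveI : Nonempty (Fin m) := ⟨⟨0, hm⟩⟩
  rcases conj_cases hp hp' hconj with ⟨rfl, rfl⟩ | ⟨rfl, rfl⟩ | ⟨hpt, hpt', hc⟩
  · -- p = 1, p' = ∞ : pick the maximizing coordinate
    obtain ⟨i₀, -, hmax⟩ := Finset.exists_max_image Finset.univ (fun i => |v i|)
      ⟨⟨0, hm⟩, Finset.mem_univ _⟩
    set c : ℝ := if v i₀ < 0 then -1 else 1 with hc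
    have hc0 : c ≠ 0 := by rw [hc]; split <;> norm_num
    have hcabs : |c| = 1 := by rw [hc]; split <;> norm_num
    refine ⟨Pi.single i₀ c, ?_, ?_⟩
    · intro h
      have := congrFun h i₀
      rw [Pi.single_eq_same] at this
      exact hc0 this
    · rw [lpnorm_single hp, hcabs, one_mul]
      have h1 : ∑ i, (Pi.single i₀ c : Fin m → ℝ) i * v i = c * v i₀ := by
        rw [Finset.sum_eq_single i₀]
        · rw [Pi.single_eq_same]
        · intro j _ hj
          rw [Pi.single_eq_of_ne hj, zero_mul]
        · simp
      have h2 : c * v i₀ = |v i₀| := by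
        rw [hc]; split
        · rw [neg_one_mul, abs_of_neg ‹_›]
        · rw [one_mul, abs_of_nonneg (not_lt.1 ‹_›)]
      have h3 : lpnorm ∞ v = |v i₀| := by
        rw [lpnorm_top]
        have hb : BddAbove (Set.range fun i => |v i|) := Set.Finite.bddAbove (Set.finite_range _)
        exact le_antisymm (ciSup_le fun i => hmax i (Finset.mem_univ i)) (le_ciSup hb i₀)
      rw [h1, h2, h3]
  · -- p = ∞, p' = 1 : pick the sign vector
    refine ⟨fun i => if v i < 0 then -1 else 1, ?_, ?_⟩
    · intro h
      have := congrFun h ⟨0, hm⟩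
      simp only [Pi.zero_apply] at this
      split at this <;> norm_num at this
    · have h1 : ∀ i, (if v i < 0 then (-1:ℝ) else 1) * v i = |v i| := by
        intro i; split
        · rw [neg_one_mul, abs_of_neg ‹_›]
        · rw [one_mul, abs_of_nonneg (not_lt.1 ‹_›)]
      have h2 : lpnorm ∞ (fun i => if v i < 0 then (-1:ℝ) else 1) = 1 := by
        rw [lpnorm_top]
        have : ∀ i, |if v i < 0 then (-1:ℝ) else 1| = 1 := fun i => by split <;> norm_num
        simp only [this]
        exact ciSup_const
      rw [lpnorm_one, h2, one_mul]
      exact Finset.sum_congr rfl fun i _ => h1 i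
  · -- both finite
    have hp0 : 0 < p.toReal := lt_trans zero_lt_one hc.lt
    have hq0 : 0 < p'.toReal := lt_trans zero_lt_one hc.symm.lt
    by_cases hv : v = 0
    · refine ⟨Pi.single ⟨0, hm⟩ 1, ?_, ?_⟩
      · intro h
        have := congrFun h ⟨0, hm⟩
        rw [Pi.single_eq_same] at this
        norm_num at this
      · subst hv
        simp only [Pi.zero_apply, mul_zero, Finset.sum_const_zero]
        rw [(lpnorm_eq_zero hp').2 rfl, mul_zero]
    · set qt := p'.toReal with hqt
      set y : Fin m → ℝ := fun i => (if v i < 0 then -1 else 1) * |v i| ^ (qt - 1) with hy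
      obtain ⟨j, hj⟩ := Function.ne_iff.1 hv
      have hvj : v j ≠ 0 := by simpa using hj
      set S : ℝ := ∑ i, |v i| ^ qt with hS
      have hSpos : 0 < S := by
        apply Finset.sum_pos' (fun i _ => Real.rpow_nonneg (abs_nonneg _) _)
        exact ⟨j, Finset.mem_univ j, Real.rpow_pos_of_pos (abs_pos.2 hvj) _⟩
      have habs : ∀ i, |y i| = |v i| ^ (qt - 1) := by
        intro i
        rw [hy]
        simp only []
        rw [abs_mul, abs_of_nonneg (Real.rpow_nonneg (abs_nonneg _) _)]
        have : |if v i < 0 then (-1:ℝ) else 1| = 1 := by split <;> norm_num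
        rw [this, one_mul]
      have hyv : ∀ i, y i * v i = |v i| ^ qt := by
        intro i
        by_cases hvi : v i = 0
        · rw [hy]; simp only []
          rw [hvi, mul_zero, abs_zero, Real.zero_rpow hq0.ne']
        · have h1 : y i * v i = |v i| ^ (qt - 1) * |v i| := by
            rw [hy]; simp only []
            set r := |v i| ^ (qt - 1) with hr
            by_cases hlt : v i < 0
            · rw [if_pos hlt, abs_of_neg hlt]; ring
            · rw [if_neg hlt, abs_of_nonneg (not_lt.1 hlt)]; ring
          rw [h1, ← Real.rpow_add_one (abs_ne_zero.2 hvi), sub_add_cancel]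
      have hysum : ∑ i, y i * v i = S := Finset.sum_congr rfl fun i _ => hyv i
      have hynorm : lpnorm p y = S ^ (1 / p.toReal) := by
        rw [lpnorm_eq_sum' hp0]
        congr 1
        refine Finset.sum_congr rfl fun i _ => ?_
        rw [habs i, ← Real.rpow_mul (abs_nonneg _), hc.symm.sub_one_mul_conj]
      have hvnorm : lpnorm p' v = S ^ (1 / qt) := lpnorm_eq_sum' hq0 v
      have hyne : y ≠ 0 := by
        intro h
        have := congrFun h j
        rw [hy] at this
        simp only [Pi.zero_apply] at this
        have hpos : (0:ℝ) < |v j| ^ (qt - 1) := Real.rpow_pos_of_pos (abs_pos.2 hvj) _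
        rcases mul_eq_zero.1 this with h' | h'
        · revert h'; split <;> norm_num
        · exact hpos.ne' h'
      refine ⟨y, hyne, ?_⟩
      rw [hysum, hynorm, hvnorm, ← Real.rpow_add hSpos]
      rw [one_div, one_div, hc.inv_add_inv_eq_one, Real.rpow_one]

/-- Let `H` be an RKHS of functions `f : Δ^m → ℝ^m` with matrix-valued
kernel `k`.  (`ev` realizes elements of `H` as functions, `K t u = k(·,t)u ∈ H`, and `hrep`
is the reproducing property `⟨u, f(t)⟩ = ⟨k(·,t)u, f⟩_H`.)  Then for every `t ∈ Δ^m`, the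
operator norm of `u ↦ k(·,t)u` from `(ℝ^m, ‖·‖_p)` to `H` equals `‖k(t,t)‖_{p;p'}^{1/2}`,
where `p'` is the Hölder conjugate of `p`. -/
theorem rkhs_kernel_column_norm {m : ℕ} {H : Type*}
    [NormedAddCommGroup H] [InnerProductSpace ℝ H] [CompleteSpace H]
    (ev : H →ₗ[ℝ] (stdSimplex ℝ (Fin m) → Fin m → ℝ))
    (hinj : Function.Injective ev)
    (k : stdSimplex ℝ (Fin m) → stdSimplex ℝ (Fin m) → Matrix (Fin m) (Fin m) ℝ)
    (K : stdSimplex ℝ (Fin m) → (Fin m → ℝ) →ₗ[ℝ] H)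
    (hK : ∀ t u s, ev (K t u) s = (k s t).mulVec u)
    (hrep : ∀ (t : stdSimplex ℝ (Fin m)) (u : Fin m → ℝ) (f : H),
      ∑ i, u i * ev f t i = (inner ℝ (K t u) f : ℝ))
    (p p' : ℝ≥0∞) (hp : 1 ≤ p) (hp' : 1 ≤ p') (hconj : 1 / p + 1 / p' = 1)
    (t : stdSimplex ℝ (Fin m)) :
    sSup {c : ℝ | ∃ u : Fin m → ℝ, u ≠ 0 ∧ c = ‖K t u‖ / lpnorm p u}
      = Real.sqrt (matOpNorm p p' (k t t)) := by
  classical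
  have hkey : ∀ y u : Fin m → ℝ,
      ∑ i, y i * (k t t).mulVec u i = (inner ℝ (K t y) (K t u) : ℝ) := by
    intro y u
    simpa [hK t u t] using hrep t y (K t u)
  have hQsq : ∀ u : Fin m → ℝ, ‖K t u‖ ^ 2 = ∑ i, u i * (k t t).mulVec u i := by
    intro u
    rw [hkey u u, real_inner_self_eq_norm_sq]
  rw [matOpNorm]
  rcases Nat.eq_zero_or_pos m with hm | hm
  · subst hm
    have hL : {c : ℝ | ∃ u : Fin 0 → ℝ, u ≠ 0 ∧ c = ‖K t u‖ / lpnorm p u} = ∅ := by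
      ext c
      simp only [Set.mem_setOf_eq, Set.mem_empty_iff_false, iff_false, not_exists]
      rintro u ⟨hu, -⟩
      exact hu (Subsingleton.elim u 0)
    have hR : {c : ℝ | ∃ x : Fin 0 → ℝ, x ≠ 0 ∧
        c = lpnorm p' ((k t t).mulVec x) / lpnorm p x} = ∅ := by
      ext c
      simp only [Set.mem_setOf_eq, Set.mem_empty_iff_false, iff_false, not_exists]
      rintro u ⟨hu, -⟩
      exact hu (Subsingleton.elim u 0)
    rw [hL, hR, Real.sSup_empty, Real.sqrt_zero]
  · haveI : Nonempty (Fin m) := ⟨⟨0, hm⟩⟩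
    set L := {c : ℝ | ∃ u : Fin m → ℝ, u ≠ 0 ∧ c = ‖K t u‖ / lpnorm p u} with hLdef
    set R := {c : ℝ | ∃ x : Fin m → ℝ, x ≠ 0 ∧
        c = lpnorm p' ((k t t).mulVec x) / lpnorm p x} with hRdef
    have hu₀ : (Pi.single ⟨0, hm⟩ 1 : Fin m → ℝ) ≠ 0 := by
      intro h
      have := congrFun h ⟨0, hm⟩
      rw [Pi.single_eq_same] at this
      norm_num at this
    have hLne : L.Nonempty := ⟨_, Pi.single ⟨0, hm⟩ 1, hu₀, rfl⟩
    have hRne : R.Nonempty := ⟨_, Pi.single ⟨0, hm⟩ 1, hu₀, rfl⟩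
    -- bound for L
    have hKle : ∀ u : Fin m → ℝ,
        ‖K t u‖ ≤ (∑ i, ‖K t (Pi.single i 1)‖) * lpnorm p u := by
      intro u
      have hdecomp : K t u = ∑ i, u i • K t (Pi.single i 1) := by
        have h1 : u = ∑ i, u i • (Pi.single i 1 : Fin m → ℝ) := by
          conv_lhs => rw [← Finset.univ_sum_single u]
          refine Finset.sum_congr rfl fun i _ => ?_
          ext j
          rcases eq_or_ne j i with rfl | hj
          · simp
          · simp [Pi.single_eq_of_ne hj]
        calc K t u = K t (∑ i, u i • (Pi.single i 1 : Fin m → ℝ)) := by rw [← h1]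
          _ = ∑ i, u i • K t (Pi.single i 1) := by rw [map_sum]; simp
      rw [hdecomp]
      calc ‖∑ i, u i • K t (Pi.single i 1)‖ ≤ ∑ i, ‖u i • K t (Pi.single i 1)‖ :=
            norm_sum_le _ _
        _ = ∑ i, |u i| * ‖K t (Pi.single i 1)‖ := by
            simp [norm_smul, Real.norm_eq_abs]
        _ ≤ ∑ i, lpnorm p u * ‖K t (Pi.single i 1)‖ :=
            Finset.sum_le_sum fun i _ =>
              mul_le_mul_of_nonneg_right (coord_le_lpnorm hp u i) (norm_nonneg _)
        _ = (∑ i, ‖K t (Pi.single i 1)‖) * lpnorm p u := by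
            rw [← Finset.mul_sum, mul_comm]
    have hLbdd : BddAbove L := by
      refine ⟨∑ i, ‖K t (Pi.single i 1)‖, ?_⟩
      rintro c ⟨u, hu, rfl⟩
      rw [div_le_iff₀ (lpnorm_pos hp hu)]
      exact hKle u
    -- bound for R
    have hAle : ∀ u : Fin m → ℝ, lpnorm p' ((k t t).mulVec u)
        ≤ (∑ i, ∑ j, |k t t i j|) * lpnorm p u := by
      intro u
      calc lpnorm p' ((k t t).mulVec u) ≤ ∑ i, |(k t t).mulVec u i| := lpnorm_le_sum hp' _
        _ ≤ ∑ i, ∑ j, |k t t i j| * lpnorm p u := by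
            refine Finset.sum_le_sum fun i _ => ?_
            calc |(k t t).mulVec u i| ≤ ∑ j, |k t t i j * u j| := by
                  rw [Matrix.mulVec, dotProduct]
                  exact Finset.abs_sum_le_sum_abs _ _
              _ ≤ ∑ j, |k t t i j| * lpnorm p u := by
                  refine Finset.sum_le_sum fun j _ => ?_
                  rw [abs_mul]
                  exact mul_le_mul_of_nonneg_left (coord_le_lpnorm hp u j) (abs_nonneg _)
        _ = (∑ i, ∑ j, |k t t i j|) * lpnorm p u := by
            rw [Finset.sum_mul]
            exact Finset.sum_congr rfl fun i _ => (Finset.sum_mul _ _ _).symm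
    have hRbdd : BddAbove R := by
      refine ⟨∑ i, ∑ j, |k t t i j|, ?_⟩
      rintro c ⟨u, hu, rfl⟩
      rw [div_le_iff₀ (lpnorm_pos hp hu)]
      exact hAle u
    set S := sSup L with hSdef
    set T := sSup R with hTdef
    have hSmem : ∀ u : Fin m → ℝ, u ≠ 0 → ‖K t u‖ / lpnorm p u ≤ S :=
      fun u hu => le_csSup hLbdd ⟨u, hu, rfl⟩
    have hTmem : ∀ u : Fin m → ℝ, u ≠ 0 →
        lpnorm p' ((k t t).mulVec u) / lpnorm p u ≤ T :=
      fun u hu => le_csSup hRbdd ⟨u, hu, rfl⟩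
    have hS0 : 0 ≤ S :=
      le_trans (div_nonneg (norm_nonneg _) (lpnorm_nonneg hp _)) (hSmem _ hu₀)
    have h1 : S ≤ Real.sqrt T := by
      apply csSup_le hLne
      rintro c ⟨u, hu, rfl⟩
      have hN : 0 < lpnorm p u := lpnorm_pos hp hu
      have hc0 : 0 ≤ ‖K t u‖ / lpnorm p u := div_nonneg (norm_nonneg _) hN.le
      have hsq : (‖K t u‖ / lpnorm p u) ^ 2 ≤ T := by
        rw [div_pow, div_le_iff₀ (by positivity)]
        calc ‖K t u‖ ^ 2 = ∑ i, u i * (k t t).mulVec u i := hQsq u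
          _ ≤ lpnorm p u * lpnorm p' ((k t t).mulVec u) :=
              holder_mul hp hp' hconj u ((k t t).mulVec u)
          _ ≤ lpnorm p u * (T * lpnorm p u) := by
              refine mul_le_mul_of_nonneg_left ?_ hN.le
              rw [← div_le_iff₀ hN] at *
              exact hTmem u hu
          _ = T * lpnorm p u ^ 2 := by ring
      calc ‖K t u‖ / lpnorm p u = Real.sqrt ((‖K t u‖ / lpnorm p u) ^ 2) :=
            (Real.sqrt_sq hc0).symm
        _ ≤ Real.sqrt T := Real.sqrt_le_sqrt hsq
    have h2 : T ≤ S ^ 2 := by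
      apply csSup_le hRne
      rintro c ⟨x, hx, rfl⟩
      have hNx : 0 < lpnorm p x := lpnorm_pos hp hx
      obtain ⟨y, hy, hattain⟩ := lp_attain hm hp hp' hconj ((k t t).mulVec x)
      have hNy : 0 < lpnorm p y := lpnorm_pos hp hy
      have hKy : ‖K t y‖ ≤ S * lpnorm p y := (div_le_iff₀ hNy).1 (hSmem y hy)
      have hKx : ‖K t x‖ ≤ S * lpnorm p x := (div_le_iff₀ hNx).1 (hSmem x hx)
      have hinner : ∑ i, y i * (k t t).mulVec x i ≤ ‖K t y‖ * ‖K t x‖ := by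
        rw [hkey y x]
        exact real_inner_le_norm _ _
      have hmain : lpnorm p y * lpnorm p' ((k t t).mulVec x)
          ≤ lpnorm p y * (S ^ 2 * lpnorm p x) := by
        rw [← hattain]
        calc ∑ i, y i * (k t t).mulVec x i ≤ ‖K t y‖ * ‖K t x‖ := hinner
          _ ≤ (S * lpnorm p y) * (S * lpnorm p x) :=
              mul_le_mul hKy hKx (norm_nonneg _) (by positivity)
          _ = lpnorm p y * (S ^ 2 * lpnorm p x) := by ring
      have := (mul_le_mul_iff_right₀ hNy).1 hmain
      rw [div_le_iff₀ hNx]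
      exact this
    refine le_antisymm h1 ?_
    calc Real.sqrt T ≤ Real.sqrt (S ^ 2) := Real.sqrt_le_sqrt h2
      _ = S := Real.sqrt_sq hS0
end

section
/- Let F be the class of continuous functions f : Δ^m → ℝ^m. Then the calibration error CE[F, g] = sup_{f∈F} E[⟨Δ, f(G)⟩_{ℝ^m}] is zero if and only if the model g is calibrated in the strong sense (Δ = 0 almost surely). -/
open MeasureTheory
open scoped ENNReal NNReal BoundedContinuousFunction

/-- Let `F` be the class of continuous functions `f : Δ^m → ℝ^m`.  The
calibration error `CE[F,g] = sup_{f ∈ F} E[⟨Δ, f(G)⟩]` (supremum in the extended reals)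
is zero if and only if the model is calibrated in the strong sense, i.e. `Δ = δ(G) = 0`
almost surely.  Here `G` is a random element of the simplex and `δ` is the (bounded,
measurable) calibration discrepancy function. -/
theorem calibration_error_continuous_eq_zero_iff
    {m : ℕ} {Ω : Type*} [MeasurableSpace Ω]
    (ℙ : Measure Ω) [IsProbabilityMeasure ℙ]
    (G : Ω → stdSimplex ℝ (Fin m)) (hG : Measurable G)
    (δ : stdSimplex ℝ (Fin m) → Fin m → ℝ)
    (hδm : Measurable δ) (hδb : ∀ t, ‖δ t‖ ≤ 1) :
    sSup ((fun f : stdSimplex ℝ (Fin m) → Fin m → ℝ =>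
        ((∫ ω, ∑ i, δ (G ω) i * f (G ω) i ∂ℙ : ℝ) : EReal)) '' {f | Continuous f}) = 0
      ↔ ∀ᵐ ω ∂ℙ, δ (G ω) = 0 := by
  constructor
  · intro hsup
    -- every continuous test function gives zero expectation
    have h0 : ∀ f : stdSimplex ℝ (Fin m) → Fin m → ℝ, Continuous f →
        ∫ ω, ∑ i, δ (G ω) i * f (G ω) i ∂ℙ = 0 := by
      have hle : ∀ f : stdSimplex ℝ (Fin m) → Fin m → ℝ, Continuous f →
          ((∫ ω, ∑ i, δ (G ω) i * f (G ω) i ∂ℙ : ℝ) : EReal) ≤ 0 := by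
        intro f hf
        rw [← hsup]
        exact le_sSup ⟨f, hf, rfl⟩
      intro f hf
      have h1 := hle f hf
      have h2 := hle (fun t => -f t) hf.neg
      have hneg : ∫ ω, ∑ i, δ (G ω) i * (-f (G ω)) i ∂ℙ
          = -∫ ω, ∑ i, δ (G ω) i * f (G ω) i ∂ℙ := by
        rw [← integral_neg]
        congr 1; funext ω
        simp [mul_neg]
      rw [hneg] at h2
      have h1' : (∫ ω, ∑ i, δ (G ω) i * f (G ω) i ∂ℙ : ℝ) ≤ 0 := by exact_mod_cast h1
      have h2' : (-∫ ω, ∑ i, δ (G ω) i * f (G ω) i ∂ℙ : ℝ) ≤ 0 := by exact_mod_cast h2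
      linarith
    set μ := ℙ.map G with hμdef
    haveI : IsProbabilityMeasure μ := Measure.isProbabilityMeasure_map hG.aemeasurable
    have hδi : ∀ i : Fin m, Measurable fun t => δ t i := fun i =>
      (measurable_pi_apply i).comp hδm
    have hδib : ∀ i t, |δ t i| ≤ 1 := fun i t =>
      le_trans (by simpa using norm_le_pi_norm (δ t) i) (hδb t)
    -- transfer to the pushforward measure
    have hμ0 : ∀ f : stdSimplex ℝ (Fin m) → Fin m → ℝ, Continuous f →
        ∫ t, ∑ i, δ t i * f t i ∂μ = 0 := by
      intro f hf
      have hm : Measurable fun t => ∑ i, δ t i * f t i :=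
        Finset.measurable_sum _ fun i _ =>
          (hδi i).mul ((measurable_pi_apply i).comp hf.measurable)
      rw [hμdef, integral_map hG.aemeasurable hm.aestronglyMeasurable]
      exact h0 f hf
    -- scalar tests
    have hscal : ∀ (i : Fin m) (g : stdSimplex ℝ (Fin m) →ᵇ ℝ≥0),
        ∫ t, δ t i * (g t : ℝ) ∂μ = 0 := by
      intro i g
      have hgc : Continuous fun t => (g t : ℝ) := NNReal.continuous_coe.comp g.continuous
      have := hμ0 (fun t j => if j = i then (g t : ℝ) else 0) (by
        apply continuous_pi; intro j
        by_cases hj : j = i <;> simp [hj, hgc, continuous_const])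
      simpa [mul_ite, mul_zero] using this
    -- integrability of bounded measurable scalar tests
    have hintegrable : ∀ (e : stdSimplex ℝ (Fin m) → ℝ), Measurable e → (∀ t, |e t| ≤ 1) →
        ∀ g : stdSimplex ℝ (Fin m) →ᵇ ℝ≥0, Integrable (fun t => e t * (g t : ℝ)) μ := by
      intro e hem heb g
      set gR : BoundedContinuousFunction (stdSimplex ℝ (Fin m)) ℝ :=
        BoundedContinuousFunction.comp _ (isometry_subtype_coe.lipschitz) g with hgR
      refine (integrable_const ((1 : ℝ) * ‖gR‖)).mono'
        ((hem.mul (NNReal.continuous_coe.comp g.continuous).measurable).aestronglyMeasurable)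
        (Filter.Eventually.of_forall fun t => ?_)
      rw [Real.norm_eq_abs, abs_mul]
      have h1 : |(g t : ℝ)| ≤ ‖gR‖ := by
        have := gR.norm_coe_le_norm t
        rwa [Real.norm_eq_abs] at this
      exact mul_le_mul (heb t) h1 (abs_nonneg _) zero_le_one
    have key : ∀ i : Fin m, ∀ᵐ t ∂μ, δ t i = 0 := by
      intro i
      set d : stdSimplex ℝ (Fin m) → ℝ := fun t => δ t i with hd
      have hdm : Measurable d := hδi i
      have hdb : ∀ t, |d t| ≤ 1 := hδib i
      have hdb' : ∀ t, |(-d) t| ≤ 1 := fun t => by simpa using hdb t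
      -- lintegral computation against densities
      have hcomp : ∀ (e : stdSimplex ℝ (Fin m) → ℝ), Measurable e → (∀ t, 0 ≤ e t) →
          (∀ t, |e t| ≤ 1) → ∀ g : stdSimplex ℝ (Fin m) →ᵇ ℝ≥0,
          ∫⁻ t, ((g t : ℝ≥0) : ℝ≥0∞) ∂(μ.withDensity fun t => ENNReal.ofReal (e t))
            = ENNReal.ofReal (∫ t, e t * (g t : ℝ) ∂μ) := by
        intro e hem he0 heb g
        have hgm : Measurable fun t => ((g t : ℝ≥0) : ℝ≥0∞) :=
          measurable_coe_nnreal_ennreal.comp g.continuous.measurable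
        rw [lintegral_withDensity_eq_lintegral_mul μ (hem.ennreal_ofReal) hgm]
        rw [MeasureTheory.ofReal_integral_eq_lintegral_ofReal (hintegrable e hem heb g)
          (Filter.Eventually.of_forall fun t => mul_nonneg (he0 t) (g t).coe_nonneg)]
        congr 1; funext t
        rw [Pi.mul_apply, ENNReal.ofReal_mul (he0 t), ENNReal.ofReal_coe_nnreal]
      have hposm : Measurable fun t => max (d t) 0 := hdm.max measurable_const
      have hnegm : Measurable fun t => max (-d t) 0 := hdm.neg.max measurable_const
      have hposb : ∀ t, |max (d t) 0| ≤ 1 := fun t => by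
        rw [abs_of_nonneg (le_max_right _ _)]
        exact max_le (le_trans (le_abs_self _) (hdb t)) zero_le_one
      have hnegb : ∀ t, |max (-d t) 0| ≤ 1 := fun t => by
        rw [abs_of_nonneg (le_max_right _ _)]
        exact max_le (le_trans (le_abs_self _) (by simpa using hdb t)) zero_le_one
      have hfinp : IsFiniteMeasure (μ.withDensity fun t => ENNReal.ofReal (max (d t) 0)) := by
        refine isFiniteMeasure_withDensity ?_
        refine ne_of_lt (lt_of_le_of_lt (lintegral_mono (g := fun _ => (1 : ℝ≥0∞))
          fun t => ENNReal.ofReal_le_one.mpr (le_trans (le_abs_self _) (hposb t))) ?_)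
        simp
      have hνeq : (μ.withDensity fun t => ENNReal.ofReal (max (d t) 0))
          = μ.withDensity fun t => ENNReal.ofReal (max (-d t) 0) := by
        refine ext_of_forall_lintegral_eq_of_IsFiniteMeasure fun g => ?_
        rw [hcomp _ hposm (fun t => le_max_right _ _) hposb g,
          hcomp _ hnegm (fun t => le_max_right _ _) hnegb g]
        congr 1
        have hsub := integral_sub (hintegrable _ hposm hposb g) (hintegrable _ hnegm hnegb g)
        have heq : (fun t => max (d t) 0 * (g t : ℝ) - max (-d t) 0 * (g t : ℝ))
            = fun t => d t * (g t : ℝ) := by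
          funext t
          rw [← sub_mul, max_zero_sub_max_neg_zero_eq_self]
        rw [heq, hscal i g] at hsub
        linarith [hsub]
      have hae := (withDensity_eq_iff_of_sigmaFinite hposm.ennreal_ofReal.aemeasurable
        hnegm.ennreal_ofReal.aemeasurable).mp hνeq
      filter_upwards [hae] with t ht
      by_contra hne
      rcases lt_or_gt_of_ne hne with hlt | hgt
      · have h1 : ENNReal.ofReal (max (d t) 0) = 0 := by
          simp [max_eq_right hlt.le]
          exact hlt.le
        have h2 : (0 : ℝ≥0∞) < ENNReal.ofReal (max (-d t) 0) := by
          rw [max_eq_left (by linarith)]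
          exact ENNReal.ofReal_pos.mpr (by linarith)
        rw [ht] at h1; rw [h1] at h2; exact lt_irrefl _ h2
      · have h2 : ENNReal.ofReal (max (-d t) 0) = 0 := by
          simp [max_eq_right (by linarith : -d t ≤ 0)]
        have h1 : (0 : ℝ≥0∞) < ENNReal.ofReal (max (d t) 0) := by
          rw [max_eq_left hgt.le]
          exact ENNReal.ofReal_pos.mpr hgt
        rw [ht, h2] at h1; exact lt_irrefl _ h1
    have hμae : ∀ᵐ t ∂μ, δ t = 0 := by
      have := ae_all_iff.mpr key
      filter_upwards [this] with t ht
      funext i; exact ht i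
    have hms : MeasurableSet {t : stdSimplex ℝ (Fin m) | δ t = 0} :=
      hδm (measurableSet_singleton 0)
    rw [hμdef, ae_map_iff hG.aemeasurable hms] at hμae
    exact hμae
  · intro hae
    apply le_antisymm
    · refine sSup_le fun x hx => ?_
      obtain ⟨f, hf, rfl⟩ := hx
      have : ∫ ω, ∑ i, δ (G ω) i * f (G ω) i ∂ℙ = 0 := by
        rw [← integral_zero Ω ℝ]
        refine integral_congr_ae ?_
        filter_upwards [hae] with ω hω
        simp [hω]
      simp [this]
    · rw [← EReal.coe_zero]
      refine le_sSup ⟨fun _ _ => 0, continuous_const, ?_⟩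
      simp
end

section
/- Let k be a universal continuous matrix-valued kernel on Δ^m. Then the kernel calibration error KCE[k,g] is zero if and only if the model g is calibrated in the strong sense. -/
open MeasureTheory
open scoped ENNReal

private lemma condexp_proj_ae {Ω : Type*} {mG : MeasurableSpace Ω} [m0 : MeasurableSpace Ω]
    {ℙ : Measure Ω} [IsFiniteMeasure ℙ] (hm : mG ≤ m0) {n : ℕ}
    {Z : Ω → Fin n → ℝ} (hZ : Integrable Z ℙ) (i : Fin n) :
    (fun ω => (ℙ[Z|mG]) ω i) =ᵐ[ℙ] ℙ[fun ω => Z ω i|mG] := by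
  have hZi : Integrable (fun ω => Z ω i) ℙ :=
    (ContinuousLinearMap.proj (R := ℝ) (φ := fun _ : Fin n => ℝ) i).integrable_comp hZ
  have hce : Integrable (fun ω => (ℙ[Z|mG]) ω i) ℙ :=
    (ContinuousLinearMap.proj (R := ℝ) (φ := fun _ : Fin n => ℝ) i).integrable_comp
      (integrable_condExp (f := Z) (m := mG))
  haveI : SigmaFinite (ℙ.trim hm) := inferInstance
  refine ae_eq_condExp_of_forall_setIntegral_eq hm hZi ?_ ?_ ?_
  · intro s _ _
    exact hce.integrableOn
  · intro s hs _
    have h1 := ContinuousLinearMap.integral_comp_comm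
      (ContinuousLinearMap.proj (R := ℝ) (φ := fun _ : Fin n => ℝ) i)
      ((integrable_condExp (f := Z) (m := mG) (μ := ℙ)).integrableOn (s := s))
    have h2 := ContinuousLinearMap.integral_comp_comm
      (ContinuousLinearMap.proj (R := ℝ) (φ := fun _ : Fin n => ℝ) i)
      (hZ.integrableOn (s := s))
    simp only [ContinuousLinearMap.proj_apply] at h1 h2
    rw [h1, h2, setIntegral_condExp hm hZ hs]
  · exact StronglyMeasurable.aestronglyMeasurable
      ((continuous_apply i).comp_stronglyMeasurable stronglyMeasurable_condExp)

private lemma integrable_dot {Ω : Type*} [MeasurableSpace Ω] {μ : Measure Ω} {n : ℕ}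
    {A B : Ω → Fin n → ℝ} (hA : Integrable A μ) (hB : AEStronglyMeasurable B μ)
    {C : ℝ} (hC : ∀ᵐ ω ∂μ, ‖B ω‖ ≤ C) :
    Integrable (fun ω => ∑ i, A ω i * B ω i) μ := by
  refine integrable_finset_sum _ fun i _ => ?_
  have hAi : Integrable (fun ω => A ω i) μ :=
    (ContinuousLinearMap.proj (R := ℝ) (φ := fun _ : Fin n => ℝ) i).integrable_comp hA
  have hBi : AEStronglyMeasurable (fun ω => B ω i) μ :=
    (continuous_apply i).comp_aestronglyMeasurable hB
  have h2 := hAi.bdd_mul (c := C) hBi ?_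
  · simpa [mul_comm] using h2
  · filter_upwards [hC] with ω hω
    exact (norm_le_pi_norm (B ω) i).trans hω

/-- Let `k` be a universal continuous matrix-valued kernel on `Δ^m`
(universality: the RKHS of `k` is uniformly dense in `C(Δ^m, ℝ^m)`).  Then the kernel
calibration error `KCE[k,g]` — the supremum of `E[⟨Δ, f(G)⟩]` over the unit ball of the
RKHS — is zero if and only if the model `g` is calibrated in the strong sense, i.e. the
calibration discrepancy `Δ = δ(g(X)) = E[e_Y − g(X) | g(X)]` vanishes almost surely. -/
theorem kce_eq_zero_iff_strongly_calibrated
    {m : ℕ} {H : Type*}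
    [NormedAddCommGroup H] [InnerProductSpace ℝ H] [CompleteSpace H]
    (ev : H →ₗ[ℝ] (stdSimplex ℝ (Fin m) → Fin m → ℝ))
    (hinj : Function.Injective ev)
    (k : stdSimplex ℝ (Fin m) → stdSimplex ℝ (Fin m) → Matrix (Fin m) (Fin m) ℝ)
    (K : stdSimplex ℝ (Fin m) → (Fin m → ℝ) →ₗ[ℝ] H)
    (hK : ∀ t u s, ev (K t u) s = (k s t).mulVec u)
    (hrep : ∀ (t : stdSimplex ℝ (Fin m)) (u : Fin m → ℝ) (f : H),
      ∑ i, u i * ev f t i = (inner ℝ (K t u) f : ℝ))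
    (hkc : Continuous (fun st : stdSimplex ℝ (Fin m) × stdSimplex ℝ (Fin m) => k st.1 st.2))
    (huniv : ∀ c : stdSimplex ℝ (Fin m) → Fin m → ℝ, Continuous c →
      ∀ ε : ℝ, 0 < ε → ∃ f : H, ∀ t, ‖ev f t - c t‖ < ε)
    {Ω 𝒳 : Type*} [MeasurableSpace Ω] [MeasurableSpace 𝒳]
    (ℙ : Measure Ω) [IsProbabilityMeasure ℙ]
    (X : Ω → 𝒳) (Y : Ω → Fin m) (hY : Measurable Y)
    (g : 𝒳 → stdSimplex ℝ (Fin m)) (hgX : Measurable (fun ω => g (X ω)))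
    (δ : stdSimplex ℝ (Fin m) → Fin m → ℝ) (hδm : Measurable δ)
    (hδ : (fun ω => δ (g (X ω))) =ᵐ[ℙ]
      MeasureTheory.condExp (MeasurableSpace.comap (fun ω => g (X ω)) inferInstance) ℙ
        (fun ω => (fun i => (if Y ω = i then (1 : ℝ) else 0) - (g (X ω) : Fin m → ℝ) i))) :
    sSup {c : ℝ | ∃ f : H, ‖f‖ ≤ 1 ∧
        c = ∫ ω, ∑ i, δ (g (X ω)) i * ev f (g (X ω)) i ∂ℙ} = 0
      ↔ ∀ᵐ ω ∂ℙ, δ (g (X ω)) = 0 := by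
  classical
  constructor
  · intro h0
    -- bounds on coordinates of points of the simplex
    have hg01 : ∀ t : stdSimplex ℝ (Fin m), ∀ i, 0 ≤ (t : Fin m → ℝ) i ∧ (t : Fin m → ℝ) i ≤ 1 := by
      intro t i
      refine ⟨t.2.1 i, ?_⟩
      calc (t : Fin m → ℝ) i ≤ ∑ j, (t : Fin m → ℝ) j :=
            Finset.single_le_sum (fun j _ => t.2.1 j) (Finset.mem_univ i)
        _ = 1 := t.2.2
    have hm : MeasurableSpace.comap (fun ω => g (X ω)) inferInstance ≤ ‹MeasurableSpace Ω› :=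
      hgX.comap_le
    -- the function Z
    have hZmeas : Measurable (fun ω =>
        (fun i => (if Y ω = i then (1 : ℝ) else 0) - (g (X ω) : Fin m → ℝ) i)) := by
      refine measurable_pi_lambda _ fun i => Measurable.sub ?_ ?_
      · exact Measurable.ite (hY (measurableSet_singleton i)) measurable_const measurable_const
      · exact (measurable_pi_apply i).comp (measurable_subtype_coe.comp hgX)
    have hZbdd : ∀ ω i, |(if Y ω = i then (1 : ℝ) else 0) - (g (X ω) : Fin m → ℝ) i| ≤ 2 := by
      intro ω i
      have h1 : |(if Y ω = i then (1 : ℝ) else 0)| ≤ 1 := by split <;> norm_num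
      have h2 : |(g (X ω) : Fin m → ℝ) i| ≤ 1 := by
        rw [abs_le]; exact ⟨by linarith [(hg01 (g (X ω)) i).1], (hg01 (g (X ω)) i).2⟩
      calc |(if Y ω = i then (1 : ℝ) else 0) - (g (X ω) : Fin m → ℝ) i|
          ≤ |(if Y ω = i then (1 : ℝ) else 0)| + |(g (X ω) : Fin m → ℝ) i| := abs_sub _ _
        _ ≤ 2 := by linarith
    have hZint : Integrable (fun ω =>
        (fun i => (if Y ω = i then (1 : ℝ) else 0) - (g (X ω) : Fin m → ℝ) i)) ℙ := by
      refine (integrable_const (2 : ℝ)).mono' hZmeas.aestronglyMeasurable ?_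
      refine Filter.Eventually.of_forall fun ω => ?_
      rw [pi_norm_le_iff_of_nonneg (by norm_num : (0:ℝ) ≤ 2)]
      intro i
      simpa [Real.norm_eq_abs] using hZbdd ω i
    -- integrability of the discrepancy
    have hΔint : Integrable (fun ω => δ (g (X ω))) ℙ := integrable_condExp.congr hδ.symm
    -- a.e. bound on the discrepancy
    have hΔbd : ∀ᵐ ω ∂ℙ, ‖δ (g (X ω))‖ ≤ 2 := by
      have h1 : ∀ i : Fin m, ∀ᵐ ω ∂ℙ, |δ (g (X ω)) i| ≤ 2 := by
        intro i
        have h2 := condexp_proj_ae hm hZint i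
        have h3 : ∀ᵐ ω ∂ℙ,
            |(if Y ω = i then (1 : ℝ) else 0) - (g (X ω) : Fin m → ℝ) i| ≤ ((2 : NNReal) : ℝ) :=
          Filter.Eventually.of_forall fun ω => by simpa using hZbdd ω i
        have h4 := ae_bdd_condExp_of_ae_bdd
          (m := MeasurableSpace.comap (fun ω => g (X ω)) inferInstance) h3
        filter_upwards [hδ, h2, h4] with ω e1 e2 e3
        rw [show δ (g (X ω)) i = _ from congrFun e1 i, e2]
        simpa using e3
      filter_upwards [(MeasureTheory.ae_all_iff).mpr h1] with ω hω
      rw [pi_norm_le_iff_of_nonneg (by norm_num : (0:ℝ) ≤ 2)]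
      intro i
      simpa [Real.norm_eq_abs] using hω i
    -- bound on the kernel diagonal
    have hkent : ∀ (t₀ : stdSimplex ℝ (Fin m)) (i j : Fin m),
        Continuous fun t : stdSimplex ℝ (Fin m) => k t t₀ i j := by
      intro t₀ i j
      exact (continuous_apply j).comp ((continuous_apply i).comp
        (hkc.comp (continuous_id.prodMk continuous_const)))
    have hkdiag : ∀ (i j : Fin m), Continuous fun t : stdSimplex ℝ (Fin m) => k t t i j := by
      intro i j
      exact (continuous_apply j).comp ((continuous_apply i).comp
        (hkc.comp (continuous_id.prodMk continuous_id)))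
    obtain ⟨M0, hM0⟩ := (isCompact_univ (X := stdSimplex ℝ (Fin m))).exists_bound_of_continuousOn
      (Continuous.continuousOn (continuous_finset_sum Finset.univ
        (fun i _ => (hkdiag i i).abs)))
    set M : ℝ := max M0 0 with hMdef
    have hM : ∀ (t : stdSimplex ℝ (Fin m)) (i : Fin m), k t t i i ≤ M := by
      intro t i
      have h1 : k t t i i ≤ ∑ j, |k t t j j| := by
        calc k t t i i ≤ |k t t i i| := le_abs_self _
          _ ≤ ∑ j, |k t t j j| :=
            Finset.single_le_sum (f := fun j => |k t t j j|) (fun j _ => abs_nonneg _) (Finset.mem_univ i)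
      have h2 := hM0 t (Set.mem_univ t)
      rw [Real.norm_eq_abs] at h2
      exact le_trans h1 (le_trans (le_abs_self _) (le_trans h2 (le_max_left _ _)))
    -- the reproducing identities
    have he : ∀ (f : H) (t : stdSimplex ℝ (Fin m)) (i : Fin m),
        ev f t i = (inner ℝ (K t (Pi.single i 1)) f : ℝ) := by
      intro f t i
      have h := hrep t (Pi.single i 1) f
      simpa [Pi.single_apply, ite_mul] using h
    have hinner : ∀ (t s : stdSimplex ℝ (Fin m)) (i : Fin m),
        (inner ℝ (K t (Pi.single i 1)) (K s (Pi.single i 1)) : ℝ) = k t s i i := by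
      intro t s i
      have h := hrep t (Pi.single i 1) (K s (Pi.single i 1))
      rw [← h]
      simp [hK, Matrix.mulVec, dotProduct, Pi.single_apply, ite_mul, mul_ite]
    have hKnormsq : ∀ (t : stdSimplex ℝ (Fin m)) (i : Fin m),
        ‖K t (Pi.single i 1)‖ ^ 2 = k t t i i := by
      intro t i
      rw [← real_inner_self_eq_norm_sq]
      exact hinner t t i
    have hsqrtM : ∀ (t : stdSimplex ℝ (Fin m)) (i : Fin m),
        ‖K t (Pi.single i 1)‖ ≤ Real.sqrt M := by
      intro t i
      have h1 : ‖K t (Pi.single i 1)‖ = Real.sqrt (k t t i i) := by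
        rw [← hKnormsq t i, Real.sqrt_sq (norm_nonneg _)]
      rw [h1]
      exact Real.sqrt_le_sqrt (hM t i)
    have hevbd : ∀ (f : H) (t : stdSimplex ℝ (Fin m)) (i : Fin m),
        |ev f t i| ≤ Real.sqrt M * ‖f‖ := by
      intro f t i
      rw [he]
      calc |(inner ℝ (K t (Pi.single i 1)) f : ℝ)| ≤ ‖K t (Pi.single i 1)‖ * ‖f‖ :=
            abs_real_inner_le_norm _ _
        _ ≤ Real.sqrt M * ‖f‖ := mul_le_mul_of_nonneg_right (hsqrtM t i) (norm_nonneg _)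
    -- continuity of ev f
    have hevcont : ∀ (f : H) (i : Fin m), Continuous fun t => ev f t i := by
      intro f i
      rw [continuous_iff_continuousAt]
      intro t₀
      rw [ContinuousAt, tendsto_iff_dist_tendsto_zero]
      have hψcont : Continuous fun t : stdSimplex ℝ (Fin m) =>
          Real.sqrt (k t t i i - 2 * k t t₀ i i + k t₀ t₀ i i) * ‖f‖ :=
        (Real.continuous_sqrt.comp (((hkdiag i i).sub
          (continuous_const.mul (hkent t₀ i i))).add continuous_const)).mul continuous_const
      have hψ0 : Real.sqrt (k t₀ t₀ i i - 2 * k t₀ t₀ i i + k t₀ t₀ i i) * ‖f‖ = 0 := by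
        have : k t₀ t₀ i i - 2 * k t₀ t₀ i i + k t₀ t₀ i i = 0 := by ring
        rw [this, Real.sqrt_zero, zero_mul]
      refine squeeze_zero (g := fun t : stdSimplex ℝ (Fin m) =>
          Real.sqrt (k t t i i - 2 * k t t₀ i i + k t₀ t₀ i i) * ‖f‖)
        (fun t => dist_nonneg) (fun t => ?_) ?_
      · -- dist bound
        have hd : ‖K t (Pi.single i 1) - K t₀ (Pi.single i 1)‖
            = Real.sqrt (k t t i i - 2 * k t t₀ i i + k t₀ t₀ i i) := by
          rw [← Real.sqrt_sq (norm_nonneg (K t (Pi.single i 1) - K t₀ (Pi.single i 1)))]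
          congr 1
          rw [norm_sub_sq_real, hKnormsq, hKnormsq, hinner t t₀ i]
        calc dist (ev f t i) (ev f t₀ i) = |ev f t i - ev f t₀ i| := Real.dist_eq _ _
          _ = |(inner ℝ (K t (Pi.single i 1) - K t₀ (Pi.single i 1)) f : ℝ)| := by
              rw [he, he, ← inner_sub_left]
          _ ≤ ‖K t (Pi.single i 1) - K t₀ (Pi.single i 1)‖ * ‖f‖ := abs_real_inner_le_norm _ _
          _ = Real.sqrt (k t t i i - 2 * k t t₀ i i + k t₀ t₀ i i) * ‖f‖ := by rw [hd]
      · have := hψcont.tendsto t₀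
        rwa [hψ0] at this
    -- boundedness of the KCE candidate set
    have hband : ∀ c ∈ {c : ℝ | ∃ f : H, ‖f‖ ≤ 1 ∧
        c = ∫ ω, ∑ i, δ (g (X ω)) i * ev f (g (X ω)) i ∂ℙ},
        |c| ≤ (m : ℝ) * (2 * Real.sqrt M) := by
      rintro c ⟨f, hf, rfl⟩
      have hb := norm_integral_le_of_norm_le_const (μ := ℙ) (C := (m : ℝ) * (2 * Real.sqrt M))
        (f := fun ω => ∑ i, δ (g (X ω)) i * ev f (g (X ω)) i) ?_
      · simpa [Real.norm_eq_abs] using hb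
      · filter_upwards [hΔbd] with ω hω
        rw [Real.norm_eq_abs]
        calc |∑ i, δ (g (X ω)) i * ev f (g (X ω)) i|
            ≤ ∑ i, |δ (g (X ω)) i * ev f (g (X ω)) i| := Finset.abs_sum_le_sum_abs _ _
          _ ≤ ∑ _i : Fin m, 2 * Real.sqrt M := by
              refine Finset.sum_le_sum fun i _ => ?_
              rw [abs_mul]
              have h1 : |δ (g (X ω)) i| ≤ 2 :=
                le_trans (by simpa [Real.norm_eq_abs] using norm_le_pi_norm (δ (g (X ω))) i) hω
              have h2 : |ev f (g (X ω)) i| ≤ Real.sqrt M :=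
                le_trans (hevbd f (g (X ω)) i)
                  (by nlinarith [Real.sqrt_nonneg M, norm_nonneg f])
              exact mul_le_mul h1 h2 (abs_nonneg _) (by norm_num)
          _ = (m : ℝ) * (2 * Real.sqrt M) := by
              rw [Finset.sum_const, Finset.card_univ, Fintype.card_fin, nsmul_eq_mul]
    have hbddAbove : BddAbove {c : ℝ | ∃ f : H, ‖f‖ ≤ 1 ∧
        c = ∫ ω, ∑ i, δ (g (X ω)) i * ev f (g (X ω)) i ∂ℙ} :=
      ⟨(m : ℝ) * (2 * Real.sqrt M), fun c hc => (abs_le.mp (hband c hc)).2⟩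
    -- the integral vanishes on the unit ball
    have hTzero1 : ∀ f : H, ‖f‖ ≤ 1 →
        ∫ ω, ∑ i, δ (g (X ω)) i * ev f (g (X ω)) i ∂ℙ = 0 := by
      intro f hf
      have hc1 : (∫ ω, ∑ i, δ (g (X ω)) i * ev f (g (X ω)) i ∂ℙ) ≤ 0 := by
        rw [← h0]
        exact le_csSup hbddAbove ⟨f, hf, rfl⟩
      have hneg : (-∫ ω, ∑ i, δ (g (X ω)) i * ev f (g (X ω)) i ∂ℙ)
          = ∫ ω, ∑ i, δ (g (X ω)) i * ev (-f) (g (X ω)) i ∂ℙ := by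
        simp only [map_neg, Pi.neg_apply, mul_neg, Finset.sum_neg_distrib, integral_neg]
      have hc2 : (-∫ ω, ∑ i, δ (g (X ω)) i * ev f (g (X ω)) i ∂ℙ) ≤ 0 := by
        rw [hneg, ← h0]
        exact le_csSup hbddAbove ⟨-f, by simpa using hf, rfl⟩
      linarith
    -- the integral vanishes for every f
    have hTzero : ∀ f : H, ∫ ω, ∑ i, δ (g (X ω)) i * ev f (g (X ω)) i ∂ℙ = 0 := by
      intro f
      by_cases hf0 : f = 0
      · subst hf0; simp
      · have hr : 0 < ‖f‖ := norm_pos_iff.mpr hf0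
        have h1 := hTzero1 (‖f‖⁻¹ • f) (by
          rw [norm_smul, norm_inv, norm_norm, inv_mul_cancel₀ (ne_of_gt hr)])
        have h2 : (fun ω => ∑ i, δ (g (X ω)) i * ev (‖f‖⁻¹ • f) (g (X ω)) i)
            = fun ω => ‖f‖⁻¹ * ∑ i, δ (g (X ω)) i * ev f (g (X ω)) i := by
          funext ω
          rw [Finset.mul_sum]
          refine Finset.sum_congr rfl fun i _ => ?_
          simp only [_root_.map_smul, Pi.smul_apply, smul_eq_mul]
          ring
        rw [h2, integral_const_mul] at h1
        exact (mul_eq_zero.mp h1).resolve_left (inv_ne_zero (ne_of_gt hr))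
    -- integrability helpers
    have int2 : ∀ f : H, Integrable (fun ω => ∑ i, δ (g (X ω)) i * ev f (g (X ω)) i) ℙ := by
      intro f
      refine integrable_dot hΔint ?_ (C := Real.sqrt M * ‖f‖) ?_
      · exact (measurable_pi_lambda _ fun i =>
          ((hevcont f i).measurable.comp hgX)).aestronglyMeasurable
      · refine Filter.Eventually.of_forall fun ω => ?_
        rw [pi_norm_le_iff_of_nonneg (by positivity)]
        intro i
        simpa [Real.norm_eq_abs] using hevbd f (g (X ω)) i
    have int1 : ∀ c : stdSimplex ℝ (Fin m) → Fin m → ℝ, Continuous c →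
        Integrable (fun ω => ∑ i, δ (g (X ω)) i * c (g (X ω)) i) ℙ := by
      intro c hc
      obtain ⟨Cc, hCc⟩ := (isCompact_univ (X := stdSimplex ℝ (Fin m))).exists_bound_of_continuousOn
        hc.continuousOn
      refine integrable_dot hΔint ?_ (C := Cc) ?_
      · exact (hc.measurable.comp hgX).aestronglyMeasurable
      · exact Filter.Eventually.of_forall fun ω => hCc (g (X ω)) (Set.mem_univ _)
    -- the integral vanishes for every continuous test function
    have hTc : ∀ c : stdSimplex ℝ (Fin m) → Fin m → ℝ, Continuous c →
        ∫ ω, ∑ i, δ (g (X ω)) i * c (g (X ω)) i ∂ℙ = 0 := by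
      intro c hc
      set I := ∫ ω, ∑ i, δ (g (X ω)) i * c (g (X ω)) i ∂ℙ with hIdef
      have key : ∀ ε : ℝ, 0 < ε → |I| ≤ ε := by
        intro ε hε
        have hε' : 0 < ε / (2 * m + 1) := by positivity
        obtain ⟨f, hf⟩ := huniv c hc (ε / (2 * m + 1)) hε'
        have hsub : I = ∫ ω, (∑ i, δ (g (X ω)) i * c (g (X ω)) i
            - ∑ i, δ (g (X ω)) i * ev f (g (X ω)) i) ∂ℙ := by
          rw [integral_sub (int1 c hc) (int2 f), hTzero f, sub_zero]
        have hb := norm_integral_le_of_norm_le_const (μ := ℙ)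
          (C := (m : ℝ) * (2 * (ε / (2 * m + 1))))
          (f := fun ω => ∑ i, δ (g (X ω)) i * c (g (X ω)) i
            - ∑ i, δ (g (X ω)) i * ev f (g (X ω)) i) ?_
        · rw [← hsub] at hb
          simp only [measure_univ, probReal_univ, mul_one, Real.norm_eq_abs] at hb
          refine le_trans hb ?_
          have h21 : (0:ℝ) < 2 * m + 1 := by positivity
          rw [show (m : ℝ) * (2 * (ε / (2 * m + 1))) = (2 * m) * ε / (2 * m + 1) by ring,
            div_le_iff₀ h21]
          nlinarith [hε.le]
        · filter_upwards [hΔbd] with ω hω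
          rw [Real.norm_eq_abs]
          have heq : ∑ i, δ (g (X ω)) i * c (g (X ω)) i
              - ∑ i, δ (g (X ω)) i * ev f (g (X ω)) i
              = ∑ i, δ (g (X ω)) i * (c (g (X ω)) i - ev f (g (X ω)) i) := by
            rw [← Finset.sum_sub_distrib]
            exact Finset.sum_congr rfl fun i _ => by ring
          rw [heq]
          calc |∑ i, δ (g (X ω)) i * (c (g (X ω)) i - ev f (g (X ω)) i)|
              ≤ ∑ i, |δ (g (X ω)) i * (c (g (X ω)) i - ev f (g (X ω)) i)| :=
                Finset.abs_sum_le_sum_abs _ _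
            _ ≤ ∑ _i : Fin m, 2 * (ε / (2 * m + 1)) := by
                refine Finset.sum_le_sum fun i _ => ?_
                rw [abs_mul]
                have h1 : |δ (g (X ω)) i| ≤ 2 :=
                  le_trans (by simpa [Real.norm_eq_abs] using norm_le_pi_norm (δ (g (X ω))) i) hω
                have h2 : |c (g (X ω)) i - ev f (g (X ω)) i| ≤ ε / (2 * m + 1) := by
                  have h3 := norm_le_pi_norm (ev f (g (X ω)) - c (g (X ω))) i
                  simp only [Pi.sub_apply, Real.norm_eq_abs] at h3
                  rw [abs_sub_comm]
                  exact le_trans h3 (hf (g (X ω))).le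
                exact mul_le_mul h1 h2 (abs_nonneg _) (by norm_num)
            _ = (m : ℝ) * (2 * (ε / (2 * m + 1))) := by
                rw [Finset.sum_const, Finset.card_univ, Fintype.card_fin, nsmul_eq_mul]
      by_contra hI
      have hIpos : 0 < |I| := abs_pos.mpr hI
      linarith [key (|I| / 2) (by linarith)]
    -- push forward to the simplex
    set ν : Measure (stdSimplex ℝ (Fin m)) := Measure.map (fun ω => g (X ω)) ℙ with hνdef
    haveI : IsProbabilityMeasure ν := Measure.isProbabilityMeasure_map hgX.aemeasurable
    have hδsm : StronglyMeasurable δ := hδm.stronglyMeasurable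
    have hδνint : Integrable δ ν := by
      rw [hνdef, integrable_map_measure hδsm.aestronglyMeasurable hgX.aemeasurable]
      exact hΔint
    have hδνbd : ∀ᵐ t ∂ν, ‖δ t‖ ≤ 2 := by
      rw [hνdef, ae_map_iff hgX.aemeasurable (measurableSet_le hδm.norm measurable_const)]
      exact hΔbd
    have hTν : ∀ c : BoundedContinuousFunction (stdSimplex ℝ (Fin m)) (Fin m → ℝ),
        ∫ t, ∑ i, δ t i * c t i ∂ν = 0 := by
      intro c
      have hms : AEStronglyMeasurable (fun t => ∑ i, δ t i * c t i)
          (Measure.map (fun ω => g (X ω)) ℙ) := by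
        refine Measurable.aestronglyMeasurable ?_
        refine Finset.measurable_sum _ fun i _ => Measurable.mul ?_ ?_
        · exact (measurable_pi_apply i).comp hδm
        · exact ((continuous_apply i).comp c.continuous).measurable
      rw [hνdef, integral_map hgX.aemeasurable hms]
      exact hTc c c.continuous
    have hJint : Integrable (fun t => ∑ i, δ t i * δ t i) ν :=
      integrable_dot hδνint hδsm.aestronglyMeasurable hδνbd
    have hJnonneg : 0 ≤ ∫ t, ∑ i, δ t i * δ t i ∂ν :=
      integral_nonneg fun t => Finset.sum_nonneg fun i _ => mul_self_nonneg _
    have hJle : ∀ ε : ℝ, 0 < ε → ∫ t, ∑ i, δ t i * δ t i ∂ν ≤ 2 * m * ε := by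
      intro ε hε
      obtain ⟨c, hc1, hc2⟩ := hδνint.exists_boundedContinuous_integral_sub_le hε
      have hint2 : Integrable (fun t => ∑ i, δ t i * c t i) ν :=
        integrable_dot hδνint c.continuous.measurable.aestronglyMeasurable (C := ‖c‖)
          (Filter.Eventually.of_forall fun t => c.norm_coe_le_norm t)
      have hint1 : Integrable (fun t => ∑ i, δ t i * (δ t i - c t i)) ν := by
        have h := integrable_dot hδνint (B := fun t => δ t - c t)
          ((hδsm.sub c.continuous.stronglyMeasurable).aestronglyMeasurable) (C := 2 + ‖c‖) ?_
        · simpa [Pi.sub_apply] using h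
        · filter_upwards [hδνbd] with t ht
          calc ‖δ t - c t‖ ≤ ‖δ t‖ + ‖c t‖ := norm_sub_le _ _
            _ ≤ 2 + ‖c‖ := add_le_add ht (c.norm_coe_le_norm t)
      have hsplit : ∫ t, ∑ i, δ t i * δ t i ∂ν
          = ∫ t, ∑ i, δ t i * (δ t i - c t i) ∂ν + ∫ t, ∑ i, δ t i * c t i ∂ν := by
        rw [← integral_add hint1 hint2]
        refine integral_congr_ae (Filter.Eventually.of_forall fun t => ?_)
        show ∑ i, δ t i * δ t i = ∑ i, δ t i * (δ t i - c t i) + ∑ i, δ t i * c t i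
        rw [← Finset.sum_add_distrib]
        exact Finset.sum_congr rfl fun i _ => by ring
      rw [hsplit, hTν c, add_zero]
      have hmono : ∫ t, ∑ i, δ t i * (δ t i - c t i) ∂ν
          ≤ ∫ t, 2 * m * ‖δ t - c t‖ ∂ν := by
        refine integral_mono_ae hint1 (((hδνint.sub hc2).norm).const_mul (2 * m)) ?_
        filter_upwards [hδνbd] with t ht
        calc ∑ i, δ t i * (δ t i - c t i)
            ≤ ∑ i, |δ t i * (δ t i - c t i)| := Finset.sum_le_sum fun i _ => le_abs_self _
          _ ≤ ∑ _i : Fin m, 2 * ‖δ t - c t‖ := by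
              refine Finset.sum_le_sum fun i _ => ?_
              rw [abs_mul]
              have h1 : |δ t i| ≤ 2 :=
                le_trans (by simpa [Real.norm_eq_abs] using norm_le_pi_norm (δ t) i) ht
              have h2 : |δ t i - c t i| ≤ ‖δ t - c t‖ := by
                have h3 := norm_le_pi_norm (δ t - c t) i
                simpa [Real.norm_eq_abs] using h3
              exact mul_le_mul h1 h2 (abs_nonneg _) (by norm_num)
          _ = 2 * m * ‖δ t - c t‖ := by
              rw [Finset.sum_const, Finset.card_univ, Fintype.card_fin, nsmul_eq_mul]
              ring
      refine le_trans hmono ?_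
      rw [integral_const_mul]
      exact mul_le_mul_of_nonneg_left hc1 (by positivity)
    have hJ0 : ∫ t, ∑ i, δ t i * δ t i ∂ν = 0 := by
      by_contra hne
      have hpos : 0 < ∫ t, ∑ i, δ t i * δ t i ∂ν := lt_of_le_of_ne hJnonneg (Ne.symm hne)
      set J := ∫ t, ∑ i, δ t i * δ t i ∂ν with hJdef
      have h21 : (0:ℝ) < 2 * m + 1 := by positivity
      have hkey := hJle (J / (2 * m + 1)) (by positivity)
      have he : 0 < J / (2 * m + 1) := by positivity
      have hJe : (J / (2 * m + 1)) * (2 * m + 1) = J := div_mul_cancel₀ J (ne_of_gt h21)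
      nlinarith [hkey, he, hJe]
    have hδ0 : ∀ᵐ t ∂ν, δ t = 0 := by
      have hae := (integral_eq_zero_iff_of_nonneg
        (fun t => Finset.sum_nonneg fun i _ => mul_self_nonneg _) hJint).mp hJ0
      filter_upwards [hae] with t ht
      have ht' : ∑ i, δ t i * δ t i = 0 := ht
      funext i
      have h4 := (Finset.sum_eq_zero_iff_of_nonneg
        (fun j _ => mul_self_nonneg (δ t j))).mp ht' i (Finset.mem_univ i)
      exact mul_self_eq_zero.mp h4
    have hset : MeasurableSet {t : stdSimplex ℝ (Fin m) | δ t = 0} := by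
      have hiff : {t : stdSimplex ℝ (Fin m) | δ t = 0} = ⋂ i, {t | δ t i = 0} := by
        ext t
        simp [funext_iff]
      rw [hiff]
      exact MeasurableSet.iInter fun i =>
        measurableSet_eq_fun ((measurable_pi_apply i).comp hδm) measurable_const
    rw [hνdef] at hδ0
    exact (ae_map_iff hgX.aemeasurable hset).mp hδ0

  · intro h
    have hset : {c : ℝ | ∃ f : H, ‖f‖ ≤ 1 ∧
        c = ∫ ω, ∑ i, δ (g (X ω)) i * ev f (g (X ω)) i ∂ℙ} = {0} := by
      ext c
      simp only [Set.mem_setOf_eq, Set.mem_singleton_iff]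
      constructor
      · rintro ⟨f, -, rfl⟩
        refine integral_eq_zero_of_ae ?_
        filter_upwards [h] with ω hω
        simp [hω]
      · rintro rfl
        exact ⟨0, by simp, by simp⟩
    rw [hset, csSup_singleton]
end

section
/- Consider the generative model where g(X) ~ Dir(a,…,a) on Δ^m (a > 0), and Y | g(X) = γ is drawn from Categorical(β) with probability π and from Categorical(γ) with probability 1−π. If β = (1/m,…,1/m), then the expected calibration error with respect to the total variation distance equals ECE = π · m^{−a}(1 − 1/m)^{(m−1)a} / (a · B(a, (m−1)a)), where B denotes the Beta function; in particular, as m → ∞ this tends to π e^{−a} a^{a−1} / Γ(a). -/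
open MeasureTheory Filter
open scoped ENNReal Topology

/-- The real Beta function `B(a,b) = ∫_0^1 x^{a-1} (1-x)^{b-1} dx`. -/
noncomputable def betaFun (a b : ℝ) : ℝ :=
  ∫ x in (0 : ℝ)..1, x ^ (a - 1) * (1 - x) ^ (b - 1)

open Set

lemma beta_intervalIntegrable {a b : ℝ} (ha : 0 < a) (hb : 0 < b) :
    IntervalIntegrable (fun x : ℝ => x ^ (a-1) * (1-x) ^ (b-1)) volume 0 1 := by
  have h := (Complex.betaIntegral_convergent (u := (a:ℂ)) (v := (b:ℂ)) (by simpa) (by simpa)).norm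
  rw [intervalIntegrable_iff] at h ⊢
  refine h.congr ?_
  rw [uIoc_of_le (zero_le_one' ℝ)]
  filter_upwards [ae_restrict_mem measurableSet_Ioc] with x hx
  have h1 : (0:ℝ) ≤ x := hx.1.le
  have h2 : (0:ℝ) ≤ 1 - x := by linarith [hx.2]
  rw [show ((a:ℂ) - 1) = ((a - 1 : ℝ) : ℂ) by push_cast; ring,
    show ((b:ℂ) - 1) = ((b - 1 : ℝ) : ℂ) by push_cast; ring,
    show (1 - (x:ℂ)) = ((1 - x : ℝ) : ℂ) by push_cast; ring,
    ← Complex.ofReal_cpow h1, ← Complex.ofReal_cpow h2, ← Complex.ofReal_mul,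
    Complex.norm_real, Real.norm_eq_abs, abs_of_nonneg (by positivity)]

lemma betaFun_eq_Gamma {a b : ℝ} (ha : 0 < a) (hb : 0 < b) :
    betaFun a b = Real.Gamma a * Real.Gamma b / Real.Gamma (a+b) := by
  have key : Complex.betaIntegral a b = (betaFun a b : ℂ) := by
    rw [Complex.betaIntegral, betaFun, ← intervalIntegral.integral_ofReal]
    refine intervalIntegral.integral_congr fun x hx => ?_
    rw [uIcc_of_le (zero_le_one' ℝ)] at hx
    rw [show ((a:ℂ) - 1) = ((a - 1 : ℝ) : ℂ) by push_cast; ring,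
      show ((b:ℂ) - 1) = ((b - 1 : ℝ) : ℂ) by push_cast; ring,
      show (1 - (x:ℂ)) = ((1 - x : ℝ) : ℂ) by push_cast; ring,
      ← Complex.ofReal_cpow hx.1, ← Complex.ofReal_cpow (by linarith [hx.2]),
      ← Complex.ofReal_mul]
  have h2 := Complex.Gamma_mul_Gamma_eq_betaIntegral (s := (a:ℂ)) (t := (b:ℂ))
    (by simpa) (by simpa)
  rw [key, ← Complex.ofReal_add, Complex.Gamma_ofReal, Complex.Gamma_ofReal,
    Complex.Gamma_ofReal] at h2
  have h3 : Real.Gamma a * Real.Gamma b = Real.Gamma (a+b) * betaFun a b := by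
    exact_mod_cast h2
  rw [h3]
  field_simp [(Real.Gamma_pos_of_pos (by linarith : (0:ℝ) < a + b)).ne']

lemma betaFun_pos {a b : ℝ} (ha : 0 < a) (hb : 0 < b) : 0 < betaFun a b := by
  rw [betaFun_eq_Gamma ha hb]
  exact div_pos (mul_pos (Real.Gamma_pos_of_pos ha) (Real.Gamma_pos_of_pos hb))
    (Real.Gamma_pos_of_pos (by linarith))

lemma abs_beta_integral {a b μ : ℝ} (ha : 0 < a) (hb : 0 < b) (hμ : a = μ * (a+b))
    (hμ0 : 0 < μ) (hμ1 : μ < 1) :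
    ∫ x in (0:ℝ)..1, |μ - x| * (x ^ (a-1) * (1-x) ^ (b-1))
      = 2 * μ ^ a * (1-μ) ^ b / (a+b) := by
  have hab : (0:ℝ) < a + b := by linarith
  set F : ℝ → ℝ := fun x => x ^ a * (1-x) ^ b / (a+b) with hF
  have hFc : Continuous F := by
    have h1 : Continuous fun x : ℝ => x ^ a :=
      continuous_id.rpow_const (fun x => Or.inr ha.le)
    have h2 : Continuous fun x : ℝ => (1-x) ^ b :=
      (continuous_const.sub continuous_id).rpow_const (fun x => Or.inr hb.le)
    exact (h1.mul h2).div_const _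
  have hF0 : F 0 = 0 := by simp [hF, Real.zero_rpow ha.ne']
  have hF1 : F 1 = 0 := by simp [hF, Real.zero_rpow hb.ne']
  have hderiv : ∀ x ∈ Ioo (0:ℝ) 1,
      HasDerivAt F ((μ - x) * (x ^ (a-1) * (1-x) ^ (b-1))) x := by
    intro x hx
    have hx0 : x ≠ 0 := hx.1.ne'
    have hx1 : (1:ℝ) - x ≠ 0 := sub_ne_zero.mpr (ne_of_gt hx.2)
    have d1 : HasDerivAt (fun x : ℝ => x ^ a) (a * x ^ (a-1)) x :=
      Real.hasDerivAt_rpow_const (Or.inl hx0)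
    have d2 : HasDerivAt (fun x : ℝ => (1-x) ^ b) (b * (1-x) ^ (b-1) * (-1)) x := by
      exact (Real.hasDerivAt_rpow_const (p := b) (Or.inl hx1)).comp x
        ((hasDerivAt_id x).const_sub 1)
    have d3 : HasDerivAt F ((a * x ^ (a-1) * (1-x) ^ b + x ^ a * (b * (1-x) ^ (b-1) * -1)) / (a+b)) x :=
      (d1.mul d2).div_const (a+b)
    convert d3 using 1
    have e1 : x ^ a = x ^ (a-1) * x := by
      rw [← Real.rpow_add_one hx0 (a-1)]; ring_nf
    have e2 : (1-x) ^ b = (1-x) ^ (b-1) * (1-x) := by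
      rw [← Real.rpow_add_one hx1 (b-1)]; ring_nf
    rw [e1, e2, eq_div_iff hab.ne']
    have hμab : μ * (a + b) = a := hμ.symm
    linear_combination (x ^ (a-1) * (1-x) ^ (b-1)) * hμab
  have hintg : IntervalIntegrable (fun x : ℝ => x ^ (a-1) * (1-x) ^ (b-1)) volume 0 1 :=
    beta_intervalIntegrable ha hb
  have hcontμ : ∀ c d : ℝ, ContinuousOn (fun x : ℝ => μ - x) (uIcc c d) :=
    fun c d => (continuous_const.sub continuous_id).continuousOn
  have hsub1 : uIcc (0:ℝ) μ ⊆ uIcc (0:ℝ) 1 := by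
    rw [uIcc_of_le hμ0.le, uIcc_of_le (zero_le_one' ℝ)]
    exact Icc_subset_Icc le_rfl hμ1.le
  have hsub2 : uIcc μ (1:ℝ) ⊆ uIcc (0:ℝ) 1 := by
    rw [uIcc_of_le hμ1.le, uIcc_of_le (zero_le_one' ℝ)]
    exact Icc_subset_Icc hμ0.le le_rfl
  have hint1 : IntervalIntegrable (fun x => (μ - x) * (x ^ (a-1) * (1-x) ^ (b-1)))
      volume 0 μ :=
    (hintg.mono_set hsub1).continuousOn_mul (hcontμ 0 μ)
  have hint2 : IntervalIntegrable (fun x => (μ - x) * (x ^ (a-1) * (1-x) ^ (b-1)))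
      volume μ 1 :=
    (hintg.mono_set hsub2).continuousOn_mul (hcontμ μ 1)
  have key1 : ∫ x in (0:ℝ)..μ, (μ - x) * (x ^ (a-1) * (1-x) ^ (b-1)) = F μ := by
    have := intervalIntegral.integral_eq_sub_of_hasDerivAt_of_tendsto hμ0
      (fun x hx => hderiv x ⟨hx.1, lt_trans hx.2 hμ1⟩) hint1
      (((hFc.tendsto 0).mono_left nhdsWithin_le_nhds))
      (((hFc.tendsto μ).mono_left nhdsWithin_le_nhds))
    rw [this, hF0, sub_zero]
  have key2 : ∫ x in μ..(1:ℝ), (μ - x) * (x ^ (a-1) * (1-x) ^ (b-1)) = - F μ := by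
    have := intervalIntegral.integral_eq_sub_of_hasDerivAt_of_tendsto hμ1
      (fun x hx => hderiv x ⟨lt_trans hμ0 hx.1, hx.2⟩) hint2
      (((hFc.tendsto μ).mono_left nhdsWithin_le_nhds))
      (((hFc.tendsto 1).mono_left nhdsWithin_le_nhds))
    rw [this, hF1, zero_sub]
  -- now the absolute value integral
  have habs1 : IntervalIntegrable (fun x => |μ - x| * (x ^ (a-1) * (1-x) ^ (b-1)))
      volume 0 μ :=
    (hintg.mono_set hsub1).continuousOn_mul
      ((continuous_const.sub continuous_id).abs.continuousOn)
  have habs2 : IntervalIntegrable (fun x => |μ - x| * (x ^ (a-1) * (1-x) ^ (b-1)))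
      volume μ 1 :=
    (hintg.mono_set hsub2).continuousOn_mul
      ((continuous_const.sub continuous_id).abs.continuousOn)
  rw [← intervalIntegral.integral_add_adjacent_intervals habs1 habs2]
  have e1 : ∫ x in (0:ℝ)..μ, |μ - x| * (x ^ (a-1) * (1-x) ^ (b-1))
      = ∫ x in (0:ℝ)..μ, (μ - x) * (x ^ (a-1) * (1-x) ^ (b-1)) := by
    refine intervalIntegral.integral_congr fun x hx => ?_
    rw [uIcc_of_le hμ0.le] at hx
    rw [abs_of_nonneg (by linarith [hx.2])]
  have e2 : ∫ x in μ..(1:ℝ), |μ - x| * (x ^ (a-1) * (1-x) ^ (b-1))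
      = ∫ x in μ..(1:ℝ), -((μ - x) * (x ^ (a-1) * (1-x) ^ (b-1))) := by
    refine intervalIntegral.integral_congr fun x hx => ?_
    rw [uIcc_of_le hμ1.le] at hx
    rw [abs_of_nonpos (by linarith [hx.1]), neg_mul]
  rw [e1, e2, intervalIntegral.integral_neg, key1, key2, hF]
  have h1μ : 1 - μ = b / (a+b) := by field_simp; linarith [hμ]
  ring

-- Wendel-type inequalities from log-convexity of Gamma
lemma gamma_upper {x c : ℝ} (hx : 0 < x) (hc0 : 0 ≤ c) (hc1 : c ≤ 1) :
    Real.Gamma (x + c) ≤ Real.Gamma x * x ^ c := by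
  rcases eq_or_lt_of_le hc0 with rfl | hc0'
  · simp [Real.rpow_zero]
  have hconv := Real.convexOn_log_Gamma
  have h := hconv.2 (mem_Ioi.mpr hx) (mem_Ioi.mpr (by linarith : (0:ℝ) < x + 1))
    (by linarith : (0:ℝ) ≤ 1 - c) hc0 (by ring)
  have hcomb : (1 - c) • x + c • (x + 1) = x + c := by simp [smul_eq_mul]; ring
  rw [hcomb] at h
  simp only [Function.comp_apply, smul_eq_mul] at h
  rw [Real.Gamma_add_one hx.ne', Real.log_mul hx.ne' (Real.Gamma_pos_of_pos hx).ne'] at h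
  have h2 : Real.log (Real.Gamma (x + c)) ≤ Real.log (Real.Gamma x) + Real.log x * c := by
    nlinarith [h]
  have := Real.exp_le_exp.mpr h2
  rwa [Real.exp_log (Real.Gamma_pos_of_pos (by linarith)), Real.exp_add,
    Real.exp_log (Real.Gamma_pos_of_pos hx), ← Real.rpow_def_of_pos hx] at this

lemma gamma_lower {x c : ℝ} (hx : 0 < x) (hc0 : 0 ≤ c) (hc1 : c ≤ 1) :
    Real.Gamma x * x ≤ Real.Gamma (x + c) * (x + c) ^ (1 - c) := by
  have hxc : 0 < x + c := by linarith
  have hconv := Real.convexOn_log_Gamma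
  have h := hconv.2 (mem_Ioi.mpr hxc) (mem_Ioi.mpr (by linarith : (0:ℝ) < x + c + 1))
    hc0 (by linarith : (0:ℝ) ≤ 1 - c) (by ring)
  have hcomb : c • (x + c) + (1 - c) • (x + c + 1) = x + 1 := by simp [smul_eq_mul]; ring
  rw [hcomb] at h
  simp only [Function.comp_apply, smul_eq_mul] at h
  rw [Real.Gamma_add_one hx.ne', Real.Gamma_add_one hxc.ne',
    Real.log_mul hx.ne' (Real.Gamma_pos_of_pos hx).ne',
    Real.log_mul hxc.ne' (Real.Gamma_pos_of_pos hxc).ne'] at h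
  have h2 : Real.log x + Real.log (Real.Gamma x)
      ≤ Real.log (Real.Gamma (x + c)) + Real.log (x + c) * (1 - c) := by nlinarith [h]
  have := Real.exp_le_exp.mpr h2
  rwa [Real.exp_add, Real.exp_add, Real.exp_log hx, Real.exp_log (Real.Gamma_pos_of_pos hx),
    Real.exp_log (Real.Gamma_pos_of_pos hxc), ← Real.rpow_def_of_pos hxc, mul_comm (x : ℝ)] at this

lemma tendsto_x_div_x_add (c : ℝ) : Tendsto (fun x : ℝ => x / (x + c)) atTop (𝓝 1) := by
  have h : (fun x : ℝ => x / (x + c)) =ᶠ[atTop] fun x => 1 - c / (x + c) := by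
    filter_upwards [eventually_gt_atTop (max 0 (-c))] with x hx
    have hxc : x + c ≠ 0 := by
      have := lt_of_le_of_lt (le_max_right 0 (-c)) hx; intro h; apply absurd h; linarith
    field_simp
    ring
  rw [tendsto_congr' h]
  have : Tendsto (fun x : ℝ => c / (x + c)) atTop (𝓝 0) := by
    apply Tendsto.div_atTop tendsto_const_nhds
    exact tendsto_atTop_add_const_right atTop c tendsto_id
  simpa using tendsto_const_nhds.sub this

lemma tendsto_gamma_ratio_base {c : ℝ} (hc0 : 0 < c) (hc1 : c ≤ 1) :
    Tendsto (fun x : ℝ => Real.Gamma (x + c) / (Real.Gamma x * x ^ c)) atTop (𝓝 1) := by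
  have hlow : Tendsto (fun x : ℝ => (x / (x + c)) ^ (1 - c)) atTop (𝓝 1) := by
    have hcont : ContinuousAt (fun y : ℝ => y ^ (1 - c)) 1 :=
      Real.continuousAt_rpow_const 1 (1 - c) (Or.inl one_ne_zero)
    have := hcont.tendsto.comp (tendsto_x_div_x_add c)
    simpa [Real.one_rpow, Function.comp_def] using this
  refine tendsto_of_tendsto_of_tendsto_of_le_of_le' hlow tendsto_const_nhds ?_ ?_
  · filter_upwards [eventually_gt_atTop (0:ℝ)] with x hx
    have hxc : 0 < x + c := by linarith
    have hG := Real.Gamma_pos_of_pos hx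
    have hGc := Real.Gamma_pos_of_pos hxc
    have hxp : 0 < x ^ c := Real.rpow_pos_of_pos hx c
    have hl := gamma_lower hx hc0.le hc1
    rw [Real.div_rpow hx.le hxc.le, div_le_div_iff₀ (Real.rpow_pos_of_pos hxc _) (by positivity)]
    -- x^(1-c) * (Γx * x^c) ≤ Γ(x+c) * (x+c)^(1-c)
    have e : x ^ (1 - c) * (Real.Gamma x * x ^ c) = Real.Gamma x * x := by
      rw [mul_comm, mul_assoc, ← Real.rpow_add hx]; ring_nf; rw [Real.rpow_one]
    calc x ^ (1-c) * (Real.Gamma x * x ^ c) = Real.Gamma x * x := e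
      _ ≤ Real.Gamma (x + c) * (x + c) ^ (1 - c) := hl
  · filter_upwards [eventually_gt_atTop (0:ℝ)] with x hx
    have hG := Real.Gamma_pos_of_pos hx
    have hxp : 0 < x ^ c := Real.rpow_pos_of_pos hx c
    rw [div_le_one (by positivity)]
    exact gamma_upper hx hc0.le hc1

lemma tendsto_gamma_ratio : ∀ (n : ℕ) (c : ℝ), 0 < c → c ≤ n + 1 →
    Tendsto (fun x : ℝ => Real.Gamma (x + c) / (Real.Gamma x * x ^ c)) atTop (𝓝 1) := by
  intro n
  induction n with
  | zero => intro c hc0 hc1; exact tendsto_gamma_ratio_base hc0 (by simpa using hc1)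
  | succ n ih =>
    intro c hc0 hc1
    rcases le_or_gt c (n + 1) with h | h
    · exact ih c hc0 h
    have hc1' : 0 < c - 1 := by
      have h1 : (1:ℝ) ≤ (n:ℝ) + 1 := le_add_of_nonneg_left n.cast_nonneg
      linarith
    have ihc := ih (c - 1) hc1' (by push_cast at hc1 ⊢; linarith)
    have hfac : Tendsto (fun x : ℝ => (x + c - 1) / x) atTop (𝓝 1) := by
      have h : (fun x : ℝ => (x + c - 1) / x) =ᶠ[atTop] fun x => 1 + (c - 1) / x := by
        filter_upwards [eventually_gt_atTop (0:ℝ)] with x hx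
        field_simp; ring
      rw [tendsto_congr' h]
      simpa using tendsto_const_nhds.add ((tendsto_const_nhds (x := c - 1)).div_atTop tendsto_id)
    have key : (fun x : ℝ => Real.Gamma (x + c) / (Real.Gamma x * x ^ c))
        =ᶠ[atTop] fun x => ((x + c - 1) / x) *
          (Real.Gamma (x + (c - 1)) / (Real.Gamma x * x ^ (c - 1))) := by
      filter_upwards [eventually_gt_atTop (0:ℝ)] with x hx
      have hxc1 : (0:ℝ) < x + c - 1 := by linarith
      have e1 : Real.Gamma (x + c) = (x + c - 1) * Real.Gamma (x + c - 1) := by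
        have := Real.Gamma_add_one hxc1.ne'
        rw [show x + c - 1 + 1 = x + c by ring] at this
        rw [this]
      have e2 : x ^ c = x ^ (c - 1) * x := by
        rw [← Real.rpow_add_one hx.ne' (c - 1)]; ring_nf
      rw [e1, e2, show x + (c - 1) = x + c - 1 by ring]
      have hG := (Real.Gamma_pos_of_pos hx).ne'
      have hxp := (Real.rpow_pos_of_pos hx (c-1)).ne'
      field_simp
    rw [tendsto_congr' key]
    simpa using hfac.mul ihc

lemma ece_limit {a : ℝ} (ha : 0 < a) (pi : ℝ) :
    Tendsto (fun M : ℕ =>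
        pi * (M : ℝ) ^ (-a) * (1 - 1 / (M : ℝ)) ^ (((M : ℝ) - 1) * a)
          / (a * betaFun a (((M : ℝ) - 1) * a)))
      atTop (𝓝 (pi * Real.exp (-a) * a ^ (a - 1) / Real.Gamma a)) := by
  set xM : ℕ → ℝ := fun M => ((M : ℝ) - 1) * a with hxM
  have hxMtop : Tendsto xM atTop atTop := by
    apply Tendsto.atTop_mul_const ha
    exact tendsto_atTop_add_const_right atTop (-1) tendsto_natCast_atTop_atTop
  -- T2 : gamma ratio
  have hratio : Tendsto (fun M : ℕ =>
      Real.Gamma (xM M + a) / (Real.Gamma (xM M) * (xM M) ^ a)) atTop (𝓝 1) := by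
    refine (tendsto_gamma_ratio ⌈a⌉₊ a ha ?_).comp hxMtop
    calc a ≤ (⌈a⌉₊ : ℝ) := Nat.le_ceil a
      _ ≤ (⌈a⌉₊ : ℝ) + 1 := by linarith
  -- 1 - 1/M → 1
  have h1M : Tendsto (fun M : ℕ => 1 - 1 / (M : ℝ)) atTop (𝓝 1) := by
    simpa using tendsto_const_nhds.sub (tendsto_one_div_atTop_nhds_zero_nat (𝕜 := ℝ))
  -- T1 : (1-1/M)^(xM M) → exp(-a)
  have hlogM : Tendsto (fun M : ℕ => (M : ℝ) * Real.log (1 - 1 / (M : ℝ))) atTop (𝓝 (-1)) := by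
    have h := (Real.tendsto_mul_log_one_add_div_atTop (-1)).comp
      (tendsto_natCast_atTop_atTop (R := ℝ))
    refine h.congr fun M => ?_
    simp only [Function.comp_apply, neg_div, sub_eq_add_neg]
  have hlog0 : Tendsto (fun M : ℕ => Real.log (1 - 1 / (M : ℝ))) atTop (𝓝 0) := by
    have := (Real.continuousAt_log one_ne_zero).tendsto.comp h1M
    simpa [Function.comp_def] using this
  have hlog : Tendsto (fun M : ℕ => xM M * Real.log (1 - 1 / (M : ℝ))) atTop (𝓝 (-a)) := by
    have h := (hlogM.sub hlog0).const_mul a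
    have he : (fun M : ℕ => a * ((M : ℝ) * Real.log (1 - 1 / (M : ℝ))
        - Real.log (1 - 1 / (M : ℝ)))) = fun M => xM M * Real.log (1 - 1 / (M : ℝ)) := by
      funext M; simp only [hxM]; ring
    rw [he] at h
    simpa using h
  have hT1 : Tendsto (fun M : ℕ => (1 - 1 / (M : ℝ)) ^ (xM M)) atTop (𝓝 (Real.exp (-a))) := by
    have h := (Real.continuous_exp.tendsto _).comp hlog
    refine Tendsto.congr' ?_ h
    filter_upwards [eventually_ge_atTop 2] with M hM
    have hMpos : (0:ℝ) < 1 - 1 / (M : ℝ) := by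
      have h2 : (2:ℝ) ≤ (M:ℝ) := by exact_mod_cast hM
      have : 1 / (M:ℝ) ≤ 1/2 := by
        apply one_div_le_one_div_of_le <;> linarith
      linarith
    simp only [Function.comp_apply]
    rw [Real.rpow_def_of_pos hMpos, mul_comm]
  -- T3 : (xM M / M)^a → a^a
  have hT3 : Tendsto (fun M : ℕ => (xM M / (M : ℝ)) ^ a) atTop (𝓝 (a ^ a)) := by
    have hb : Tendsto (fun M : ℕ => xM M / (M : ℝ)) atTop (𝓝 a) := by
      have h := h1M.mul_const a
      rw [one_mul] at h
      refine h.congr' ?_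
      filter_upwards [eventually_ge_atTop 2] with M hM
      have hM0 : (M : ℝ) ≠ 0 := by
        have h2 : (2:ℝ) ≤ (M:ℝ) := by exact_mod_cast hM
        linarith
      simp only [hxM]; field_simp
    have hcont : ContinuousAt (fun y : ℝ => y ^ a) a :=
      Real.continuousAt_rpow_const a a (Or.inl ha.ne')
    exact hcont.tendsto.comp hb
  -- assemble
  have key : (fun M : ℕ =>
        pi * (M : ℝ) ^ (-a) * (1 - 1 / (M : ℝ)) ^ (xM M) / (a * betaFun a (xM M)))
      =ᶠ[atTop] fun M => (pi / (a * Real.Gamma a)) *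
        ((1 - 1 / (M : ℝ)) ^ (xM M) *
          ((Real.Gamma (xM M + a) / (Real.Gamma (xM M) * (xM M) ^ a)) * (xM M / (M:ℝ)) ^ a)) := by
    filter_upwards [eventually_ge_atTop 2] with M hM
    have h2 : (2:ℝ) ≤ (M:ℝ) := by exact_mod_cast hM
    have hM0 : (0:ℝ) < (M:ℝ) := by linarith
    have hxMpos : 0 < xM M := by
      simp only [hxM]; apply mul_pos _ ha; linarith
    rw [betaFun_eq_Gamma ha hxMpos, show a + xM M = xM M + a by ring]
    have hGa := Real.Gamma_pos_of_pos ha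
    have hGx := Real.Gamma_pos_of_pos hxMpos
    have hGxa := Real.Gamma_pos_of_pos (by linarith : 0 < xM M + a)
    have hMa : (0:ℝ) < (M:ℝ) ^ a := Real.rpow_pos_of_pos hM0 a
    have hxa : (0:ℝ) < (xM M) ^ a := Real.rpow_pos_of_pos hxMpos a
    rw [Real.rpow_neg hM0.le, Real.div_rpow hxMpos.le hM0.le]
    field_simp
  rw [tendsto_congr' key]
  have hfin := (tendsto_const_nhds (x := pi / (a * Real.Gamma a))).mul
    (hT1.mul (hratio.mul hT3))
  have : pi / (a * Real.Gamma a) * (Real.exp (-a) * (1 * a ^ a))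
      = pi * Real.exp (-a) * a ^ (a - 1) / Real.Gamma a := by
    rw [Real.rpow_sub ha, Real.rpow_one]
    have hGa := (Real.Gamma_pos_of_pos ha).ne'
    field_simp
  rwa [this] at hfin

lemma ece_value
    {m : ℕ} (hm : 2 ≤ m) (a : ℝ) (ha : 0 < a) (pi : ℝ) (hpi0 : 0 ≤ pi) (hpi1 : pi ≤ 1)
    {Ω : Type*} [MeasurableSpace Ω] (ℙ : Measure Ω) [IsProbabilityMeasure ℙ]
    (G : Ω → stdSimplex ℝ (Fin m)) (hG : Measurable G)
    (hmarg : ∀ i : Fin m, Measure.map (fun ω => (G ω : Fin m → ℝ) i) ℙ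
      = (volume.restrict (Set.Ioo (0 : ℝ) 1)).withDensity
          (fun x => ENNReal.ofReal
            (x ^ (a - 1) * (1 - x) ^ (((m : ℝ) - 1) * a - 1)
              / betaFun a (((m : ℝ) - 1) * a)))) :
    (∫ ω, (1 / 2) * ∑ i, |pi * (1 / (m : ℝ) - (G ω : Fin m → ℝ) i)| ∂ℙ)
        = pi * (m : ℝ) ^ (-a) * (1 - 1 / (m : ℝ)) ^ (((m : ℝ) - 1) * a)
            / (a * betaFun a (((m : ℝ) - 1) * a)) := by
  have hmR : (2:ℝ) ≤ (m:ℝ) := by exact_mod_cast hm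
  have hm0 : (0:ℝ) < (m:ℝ) := by linarith
  set b : ℝ := ((m:ℝ) - 1) * a with hbdef
  set μ : ℝ := 1 / (m:ℝ) with hμdef
  have hb : 0 < b := mul_pos (by linarith) ha
  have hμ0 : 0 < μ := by positivity
  have hμ1 : μ < 1 := by rw [hμdef, div_lt_one hm0]; linarith
  have hμeq : a = μ * (a + b) := by
    rw [hμdef, hbdef]; field_simp; ring
  have hB := betaFun_pos ha hb
  have hGi : ∀ i : Fin m, Measurable (fun ω => (G ω : Fin m → ℝ) i) :=
    fun i => (measurable_pi_apply i).comp (measurable_subtype_coe.comp hG)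
  have hGmem : ∀ (ω : Ω) (i : Fin m), (G ω : Fin m → ℝ) i ∈ Icc (0:ℝ) 1 := by
    intro ω i
    refine ⟨(G ω).2.1 i, ?_⟩
    calc (G ω : Fin m → ℝ) i ≤ ∑ j, (G ω : Fin m → ℝ) j :=
          Finset.single_le_sum (fun j _ => (G ω).2.1 j) (Finset.mem_univ i)
      _ = 1 := (G ω).2.2
  have hint : ∀ i : Fin m, Integrable (fun ω => |pi * (μ - (G ω : Fin m → ℝ) i)|) ℙ := by
    intro i
    refine Integrable.mono' (integrable_const 1) ?_ (ae_of_all _ fun ω => ?_)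
    · exact (((hGi i).const_sub μ).const_mul pi).abs.aestronglyMeasurable
    · rw [Real.norm_eq_abs, abs_abs, abs_mul]
      have h0 := (hGmem ω i).1
      have h1 := (hGmem ω i).2
      have hd : |μ - (G ω : Fin m → ℝ) i| ≤ 1 := abs_le.mpr ⟨by linarith, by linarith⟩
      have hp : |pi| ≤ 1 := abs_le.mpr ⟨by linarith, hpi1⟩
      calc |pi| * |μ - (G ω : Fin m → ℝ) i| ≤ 1 * 1 := by
            apply mul_le_mul hp hd (abs_nonneg _) zero_le_one
        _ = 1 := by ring
  have hcoord : ∀ i : Fin m, ∫ ω, |pi * (μ - (G ω : Fin m → ℝ) i)| ∂ℙ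
      = pi * (2 * μ ^ a * (1-μ) ^ b / (a+b)) / betaFun a b := by
    intro i
    have hcont : Continuous fun x : ℝ => |pi * (μ - x)| := by fun_prop
    have hmap : ∫ ω, |pi * (μ - (G ω : Fin m → ℝ) i)| ∂ℙ
        = ∫ x, |pi * (μ - x)| ∂(Measure.map (fun ω => (G ω : Fin m → ℝ) i) ℙ) := by
      rw [integral_map (hGi i).aemeasurable hcont.aestronglyMeasurable]
    rw [hmap, hmarg i]
    have hρmeas : Measurable (fun x : ℝ =>
        (x ^ (a-1) * (1-x) ^ (b-1) / betaFun a b).toNNReal) := by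
      fun_prop
    rw [show (fun x : ℝ => ENNReal.ofReal
          (x ^ (a - 1) * (1 - x) ^ (b - 1) / betaFun a b))
        = fun x : ℝ => ((x ^ (a-1) * (1-x) ^ (b-1) / betaFun a b).toNNReal : ℝ≥0∞) from rfl]
    rw [integral_withDensity_eq_integral_smul hρmeas]
    have hcongr : ∫ x in Ioo (0:ℝ) 1,
          (x ^ (a-1) * (1-x) ^ (b-1) / betaFun a b).toNNReal • |pi * (μ - x)|
        = ∫ x in Ioo (0:ℝ) 1,
          (pi / betaFun a b) * (|μ - x| * (x ^ (a-1) * (1-x) ^ (b-1))) := by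
      refine setIntegral_congr_fun measurableSet_Ioo fun x hx => ?_
      have hx0 : (0:ℝ) ≤ x := hx.1.le
      have hx1 : (0:ℝ) ≤ 1 - x := by linarith [hx.2]
      have hρ0 : 0 ≤ x ^ (a-1) * (1-x) ^ (b-1) / betaFun a b := by positivity
      rw [NNReal.smul_def, Real.coe_toNNReal _ hρ0, abs_mul, abs_of_nonneg hpi0]
      ring
    rw [hcongr, integral_const_mul, ← integral_Ioc_eq_integral_Ioo,
      ← intervalIntegral.integral_of_le (zero_le_one' ℝ),
      abs_beta_integral ha hb hμeq hμ0 hμ1]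
    ring
  calc (∫ ω, (1 / 2) * ∑ i, |pi * (μ - (G ω : Fin m → ℝ) i)| ∂ℙ)
      = (1/2) * ∫ ω, ∑ i, |pi * (μ - (G ω : Fin m → ℝ) i)| ∂ℙ := by
        rw [integral_const_mul]
    _ = (1/2) * ∑ i, ∫ ω, |pi * (μ - (G ω : Fin m → ℝ) i)| ∂ℙ := by
        rw [integral_finset_sum _ (fun i _ => hint i)]
    _ = (1/2) * ((m:ℝ) * (pi * (2 * μ ^ a * (1-μ) ^ b / (a+b)) / betaFun a b)) := by
        rw [Finset.sum_congr rfl (fun i _ => hcoord i), Finset.sum_const, Finset.card_univ,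
          Fintype.card_fin, nsmul_eq_mul]
    _ = pi * (m : ℝ) ^ (-a) * (1 - μ) ^ b / (a * betaFun a b) := by
        have hab : a + b = (m:ℝ) * a := by rw [hbdef]; ring
        have hμa : μ ^ a = (m:ℝ) ^ (-a) := by
          rw [hμdef, one_div, Real.inv_rpow hm0.le, ← Real.rpow_neg hm0.le]
        rw [hab, hμa]
        field_simp

/-- Consider the generative model where the prediction
`G = g(X) ~ Dir(a,…,a)` on `Δ^m` (so each marginal `G_i` is `Beta(a, (m−1)a)`
distributed), and `Y | G = γ` is drawn from `Categorical(β)` with probability `π` and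
from `Categorical(γ)` with probability `1 − π`, so that the calibration discrepancy is
`Δ = π(β − G)`.  If `β = (1/m, …, 1/m)`, then the expected calibration error with respect
to the total variation distance, `ECE = E[‖π(β − G)‖_TV]`, equals
`π · m^{−a} (1 − 1/m)^{(m−1)a} / (a · B(a, (m−1)a))`; in particular, as `m → ∞` this
closed-form expression tends to `π e^{−a} a^{a−1} / Γ(a)`. -/
theorem ece_dirichlet_uniform_target
    {m : ℕ} (hm : 2 ≤ m) (a : ℝ) (ha : 0 < a) (pi : ℝ) (hpi0 : 0 ≤ pi) (hpi1 : pi ≤ 1)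
    {Ω : Type*} [MeasurableSpace Ω] (ℙ : Measure Ω) [IsProbabilityMeasure ℙ]
    (G : Ω → stdSimplex ℝ (Fin m)) (hG : Measurable G)
    (hmarg : ∀ i : Fin m, Measure.map (fun ω => (G ω : Fin m → ℝ) i) ℙ
      = (volume.restrict (Set.Ioo (0 : ℝ) 1)).withDensity
          (fun x => ENNReal.ofReal
            (x ^ (a - 1) * (1 - x) ^ (((m : ℝ) - 1) * a - 1)
              / betaFun a (((m : ℝ) - 1) * a)))) :
    (∫ ω, (1 / 2) * ∑ i, |pi * (1 / (m : ℝ) - (G ω : Fin m → ℝ) i)| ∂ℙ)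
        = pi * (m : ℝ) ^ (-a) * (1 - 1 / (m : ℝ)) ^ (((m : ℝ) - 1) * a)
            / (a * betaFun a (((m : ℝ) - 1) * a))
      ∧ Tendsto (fun M : ℕ =>
            pi * (M : ℝ) ^ (-a) * (1 - 1 / (M : ℝ)) ^ (((M : ℝ) - 1) * a)
              / (a * betaFun a (((M : ℝ) - 1) * a)))
          atTop (𝓝 (pi * Real.exp (-a) * a ^ (a - 1) / Real.Gamma a)) :=
  ⟨ece_value hm a ha pi hpi0 hpi1 ℙ G hG hmarg, ece_limit ha pi⟩
end
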